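/- arXiv:2311.07181 — 4 statements merged into one kernel-verified Lean document; each statement's English description precedes it below -/
import Mathlib

section
/- The map sending a lonely singles partition π = {A_1, ..., A_k} of [n] (where 1 ∈ A_1) to the partition {A_1 ∪ {n+1}, A_2, ..., A_k} of [n+1] is a well-defined injective map from the set of lonely singles partitions of [n] to the set of lonely singles partitions of [n+1]. -/
/-- `π` is a partition of `[n] = {1,…,n}`: blocks are nonempty, pairwise disjoint,
and their union is exactly `{1,…,n}`. -/
def IsPartitionOf (n : ℕ) (π : Finset (Finset ℕ)) : Prop :=
  (∀ A ∈ π, A.Nonempty) ∧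
  (∀ A ∈ π, ∀ B ∈ π, A ≠ B → Disjoint A B) ∧
  (∀ x : ℕ, x ∈ Finset.Icc 1 n ↔ ∃ A ∈ π, x ∈ A)

/-- `π` is crossing: two distinct blocks contain `a < c < b < d` with `a,b` in one and
`c,d` in the other. -/
def Crossing (π : Finset (Finset ℕ)) : Prop :=
  ∃ A ∈ π, ∃ B ∈ π, A ≠ B ∧ ∃ a ∈ A, ∃ b ∈ A, ∃ c ∈ B, ∃ d ∈ B,
    a < c ∧ c < b ∧ b < d

/-- Noncrossing partition of `[n]`. -/
def IsNCPartition (n : ℕ) (π : Finset (Finset ℕ)) : Prop :=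
  IsPartitionOf n π ∧ ¬ Crossing π

/-- Replace the singleton blocks `{i}` and `{j}` by the block `{i,j}`. -/
def mergeSingles (π : Finset (Finset ℕ)) (i j : ℕ) : Finset (Finset ℕ) :=
  insert {i, j} ((π.erase {i}).erase {j})

/-- A marriageable singles partition of `[n]`. -/
def IsMarriageable (n : ℕ) (π : Finset (Finset ℕ)) : Prop :=
  IsNCPartition n π ∧ ∃ i j : ℕ, i ≠ j ∧ {i} ∈ π ∧ {j} ∈ π ∧
    IsNCPartition n (mergeSingles π i j)

/-- A lonely singles partition of `[n]`. -/
def IsLonely (n : ℕ) (π : Finset (Finset ℕ)) : Prop :=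
  IsNCPartition n π ∧ ¬ IsMarriageable n π

/-- `C n`: the number of noncrossing partitions of `[n]`. -/
noncomputable def Cnum (n : ℕ) : ℕ := Set.ncard {π : Finset (Finset ℕ) | IsNCPartition n π}

/-- `M n`: the number of marriageable singles partitions of `[n]`. -/
noncomputable def Mnum (n : ℕ) : ℕ := Set.ncard {π : Finset (Finset ℕ) | IsMarriageable n π}

/-- `L n`: the number of lonely singles partitions of `[n]`. -/
noncomputable def Lnum (n : ℕ) : ℕ := Set.ncard {π : Finset (Finset ℕ) | IsLonely n π}

/-- `NCcount n m k`: number of noncrossing partitions of `[n]` into `m` blocks with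
exactly `k` singleton blocks. -/
noncomputable def NCcount (n m k : ℕ) : ℕ :=
  Set.ncard {π : Finset (Finset ℕ) | IsNCPartition n π ∧ π.card = m ∧
    (π.filter fun A => A.card = 1).card = k}

/-- Binomial coefficient on integers, `0` when an argument is negative. -/
def zchoose (a b : ℤ) : ℤ := if 0 ≤ a ∧ 0 ≤ b then (a.toNat).choose b.toNat else 0

namespace LonelyAux

/-- The block map: add `n+1` to the block containing `1`. -/
def fmap (n : ℕ) (A : Finset ℕ) : Finset ℕ := if 1 ∈ A then insert (n + 1) A else A

lemma subset_fmap (n : ℕ) (A : Finset ℕ) : A ⊆ fmap n A := by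
  unfold fmap; split
  · exact Finset.subset_insert _ _
  · exact Finset.Subset.refl _

lemma mem_fmap_of_ne {n x : ℕ} {A : Finset ℕ} (hx : x ∈ fmap n A) (hne : x ≠ n + 1) :
    x ∈ A := by
  unfold fmap at hx; split at hx
  · rcases Finset.mem_insert.mp hx with h | h
    · exact absurd h hne
    · exact h
  · exact hx

lemma mem_bound {n : ℕ} {π : Finset (Finset ℕ)} (h : IsPartitionOf n π)
    {A : Finset ℕ} (hA : A ∈ π) {x : ℕ} (hx : x ∈ A) : 1 ≤ x ∧ x ≤ n := by
  have := (h.2.2 x).mpr ⟨A, hA, hx⟩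
  simpa using this

lemma notMem_succ {n : ℕ} {π : Finset (Finset ℕ)} (h : IsPartitionOf n π)
    {A : Finset ℕ} (hA : A ∈ π) : (n + 1) ∉ A :=
  fun hx => by have := (mem_bound h hA hx).2; omega

lemma erase_fmap {n : ℕ} {A : Finset ℕ} (h : (n + 1) ∉ A) :
    (fmap n A).erase (n + 1) = A := by
  unfold fmap; split
  · exact Finset.erase_insert h
  · exact Finset.erase_eq_of_notMem h

lemma blocks_eq {n : ℕ} {π : Finset (Finset ℕ)} (h : IsPartitionOf n π)
    {A B : Finset ℕ} {x : ℕ} (hA : A ∈ π) (hB : B ∈ π) (hxA : x ∈ A) (hxB : x ∈ B) :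
    A = B := by
  by_contra hne
  exact Finset.disjoint_left.mp (h.2.1 A hA B hB hne) hxA hxB

lemma fmap_inj {n : ℕ} {π : Finset (Finset ℕ)} (h : IsPartitionOf n π)
    {A B : Finset ℕ} (hA : A ∈ π) (hB : B ∈ π) (heq : fmap n A = fmap n B) : A = B := by
  rw [← erase_fmap (notMem_succ h hA), ← erase_fmap (notMem_succ h hB), heq]

lemma one_mem_of_succ_mem {n : ℕ} {π : Finset (Finset ℕ)} (h : IsPartitionOf n π)
    {A : Finset ℕ} (hA : A ∈ π) (hs : n + 1 ∈ fmap n A) : 1 ∈ A := by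
  unfold fmap at hs; split at hs
  · assumption
  · exact absurd hs (notMem_succ h hA)

/-- The image is a partition of `[n+1]`. -/
lemma image_partition {n : ℕ} (hn : 1 ≤ n) {π : Finset (Finset ℕ)}
    (h : IsPartitionOf n π) : IsPartitionOf (n + 1) (π.image (fmap n)) := by
  refine ⟨?_, ?_, ?_⟩
  · intro A hA
    obtain ⟨B, hB, rfl⟩ := Finset.mem_image.mp hA
    obtain ⟨x, hx⟩ := h.1 B hB
    exact ⟨x, subset_fmap n B hx⟩
  · intro A' hA' B' hB' hne
    obtain ⟨A, hA, rfl⟩ := Finset.mem_image.mp hA'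
    obtain ⟨B, hB, rfl⟩ := Finset.mem_image.mp hB'
    have hAB : A ≠ B := fun h' => hne (by rw [h'])
    rw [Finset.disjoint_left]
    intro x hxA hxB
    by_cases hx : x = n + 1
    · subst hx
      have h1A : 1 ∈ A := one_mem_of_succ_mem h hA hxA
      have h1B : 1 ∈ B := one_mem_of_succ_mem h hB hxB
      exact hAB (blocks_eq h hA hB h1A h1B)
    · exact Finset.disjoint_left.mp (h.2.1 A hA B hB hAB)
        (mem_fmap_of_ne hxA hx) (mem_fmap_of_ne hxB hx)
  · intro x
    constructor
    · intro hx
      rw [Finset.mem_Icc] at hx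
      by_cases hxn : x = n + 1
      · have h1 : 1 ∈ Finset.Icc 1 n := Finset.mem_Icc.mpr ⟨le_refl _, hn⟩
        obtain ⟨A, hA, h1A⟩ := (h.2.2 1).mp h1
        refine ⟨fmap n A, Finset.mem_image_of_mem _ hA, ?_⟩
        subst hxn
        unfold fmap; rw [if_pos h1A]; exact Finset.mem_insert_self _ _
      · have : x ∈ Finset.Icc 1 n := Finset.mem_Icc.mpr ⟨hx.1, by omega⟩
        obtain ⟨A, hA, hxA⟩ := (h.2.2 x).mp this
        exact ⟨fmap n A, Finset.mem_image_of_mem _ hA, subset_fmap n A hxA⟩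
    · rintro ⟨A', hA', hxA'⟩
      obtain ⟨A, hA, rfl⟩ := Finset.mem_image.mp hA'
      by_cases hx : x = n + 1
      · exact Finset.mem_Icc.mpr ⟨by omega, by omega⟩
      · have := mem_bound h hA (mem_fmap_of_ne hxA' hx)
        exact Finset.mem_Icc.mpr ⟨this.1, by omega⟩

/-- The image is noncrossing. -/
lemma image_noncrossing {n : ℕ} (hn : 1 ≤ n) {π : Finset (Finset ℕ)}
    (h : IsPartitionOf n π) (hnc : ¬ Crossing π) : ¬ Crossing (π.image (fmap n)) := by
  rintro ⟨A', hA', B', hB', hne, a, ha, b, hb, c, hc, d, hd, h1, h2, h3⟩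
  obtain ⟨A, hA, rfl⟩ := Finset.mem_image.mp hA'
  obtain ⟨B, hB, rfl⟩ := Finset.mem_image.mp hB'
  have hAB : A ≠ B := fun h' => hne (by rw [h'])
  have haA : a ∈ A := mem_fmap_of_ne ha (by
    intro h'; subst h'
    have := mem_bound h hB (mem_fmap_of_ne hd (by omega))
    omega)
  by_cases hdn : d = n + 1
  · -- d = n+1, so 1 ∈ B; use the crossing 1 < a < c < b
    subst hdn
    have h1B : 1 ∈ B := one_mem_of_succ_mem h hB hd
    have hbA : b ∈ A := mem_fmap_of_ne hb (by omega)
    have hcB : c ∈ B := mem_fmap_of_ne hc (by omega)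
    have ha1 : 1 < a := by
      rcases Nat.lt_or_ge 1 a with h' | h'
      · exact h'
      · have : a = 1 := by have := (mem_bound h hA haA).1; omega
        subst this
        exact absurd (blocks_eq h hA hB haA h1B) hAB
    exact hnc ⟨B, hB, A, hA, fun h' => hAB h'.symm, 1, h1B, c, hcB, a, haA, b, hbA,
      ha1, h1, h2⟩
  · have hdB : d ∈ B := mem_fmap_of_ne hd hdn
    have hdb : d ≤ n := (mem_bound h hB hdB).2
    have hbA : b ∈ A := mem_fmap_of_ne hb (by omega)
    have hcB : c ∈ B := mem_fmap_of_ne hc (by omega)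
    exact hnc ⟨A, hA, B, hB, hAB, a, haA, b, hbA, c, hcB, d, hdB, h1, h2, h3⟩

/-- Pull back singleton blocks. -/
lemma singleton_pullback {n : ℕ} (hn : 1 ≤ n) {π : Finset (Finset ℕ)}
    (h : IsPartitionOf n π) {x : ℕ} (hx : {x} ∈ π.image (fmap n)) :
    {x} ∈ π ∧ x ≠ 1 := by
  obtain ⟨A, hA, hfA⟩ := Finset.mem_image.mp hx
  by_cases h1 : 1 ∈ A
  · exfalso
    have hmem1 : (1 : ℕ) ∈ fmap n A := subset_fmap n A h1
    have hmem2 : (n + 1 : ℕ) ∈ fmap n A := by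
      unfold fmap; rw [if_pos h1]; exact Finset.mem_insert_self _ _
    rw [hfA] at hmem1 hmem2
    rw [Finset.mem_singleton] at hmem1 hmem2
    omega
  · have : fmap n A = A := if_neg h1
    rw [this] at hfA
    subst hfA
    refine ⟨hA, ?_⟩
    intro h'
    exact h1 (by rw [← h']; exact Finset.mem_singleton_self _)

/-- Merging two singletons gives a partition. -/
lemma merge_partition {n i j : ℕ} {π : Finset (Finset ℕ)} (h : IsPartitionOf n π)
    (hij : i ≠ j) (hi : {i} ∈ π) (hj : {j} ∈ π) :
    IsPartitionOf n (mergeSingles π i j) := by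
  have hmem : ∀ A, A ∈ mergeSingles π i j ↔
      A = {i, j} ∨ (A ∈ π ∧ A ≠ {i} ∧ A ≠ {j}) := by
    intro A
    unfold mergeSingles
    simp only [Finset.mem_insert, Finset.mem_erase]
    tauto
  have key : ∀ A ∈ π, ∀ x, x ∈ A → x = i → A = {i} := by
    intro A hA x hxA hxi
    subst hxi
    exact blocks_eq h hA hi hxA (Finset.mem_singleton_self _)
  have keyj : ∀ A ∈ π, ∀ x, x ∈ A → x = j → A = {j} := by
    intro A hA x hxA hxj
    subst hxj
    exact blocks_eq h hA hj hxA (Finset.mem_singleton_self _)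
  refine ⟨?_, ?_, ?_⟩
  · intro A hA
    rcases (hmem A).mp hA with rfl | ⟨hA, _, _⟩
    · exact ⟨i, by simp⟩
    · exact h.1 A hA
  · intro A hA B hB hne
    rcases (hmem A).mp hA with rfl | ⟨hA, hAi, hAj⟩ <;>
      rcases (hmem B).mp hB with rfl | ⟨hB, hBi, hBj⟩
    · exact absurd rfl hne
    · rw [Finset.disjoint_left]
      intro x hx hxB
      rcases Finset.mem_insert.mp hx with h' | h'
      · exact hBi (key B hB x hxB h')
      · rw [Finset.mem_singleton] at h'
        exact hBj (keyj B hB _ hxB h')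
    · rw [Finset.disjoint_right]
      intro x hx hxA
      rcases Finset.mem_insert.mp hx with h' | h'
      · exact hAi (key A hA x hxA h')
      · rw [Finset.mem_singleton] at h'
        exact hAj (keyj A hA _ hxA h')
    · exact h.2.1 A hA B hB hne
  · intro x
    constructor
    · intro hx
      obtain ⟨A, hA, hxA⟩ := (h.2.2 x).mp hx
      by_cases hAi : A = {i}
      · subst hAi
        rw [Finset.mem_singleton] at hxA
        exact ⟨({i, j} : Finset ℕ), (hmem _).mpr (Or.inl rfl), by simp [hxA]⟩
      by_cases hAj : A = {j}
      · subst hAj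
        rw [Finset.mem_singleton] at hxA
        exact ⟨({i, j} : Finset ℕ), (hmem _).mpr (Or.inl rfl), by simp [hxA]⟩
      · exact ⟨A, (hmem A).mpr (Or.inr ⟨hA, hAi, hAj⟩), hxA⟩
    · rintro ⟨A, hA, hxA⟩
      rcases (hmem A).mp hA with rfl | ⟨hA, _, _⟩
      · rcases Finset.mem_insert.mp hxA with h' | h'
        · exact (h.2.2 x).mpr ⟨{i}, hi, by rw [h']; exact Finset.mem_singleton_self _⟩
        · rw [Finset.mem_singleton] at h'
          exact (h.2.2 x).mpr ⟨{j}, hj, by rw [h']; exact Finset.mem_singleton_self _⟩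
      · exact (h.2.2 x).mpr ⟨A, hA, hxA⟩

/-- Transfer marriageability back from the image. -/
lemma transfer {n : ℕ} (hn : 1 ≤ n) {π : Finset (Finset ℕ)} (hπ : IsPartitionOf n π)
    (hnc : ¬ Crossing π) (hm : IsMarriageable (n + 1) (π.image (fmap n))) :
    IsMarriageable n π := by
  obtain ⟨_, i, j, hij, hi', hj', hNCm⟩ := hm
  obtain ⟨hi, hi1⟩ := singleton_pullback hn hπ hi'
  obtain ⟨hj, hj1⟩ := singleton_pullback hn hπ hj'
  have Mpart : IsPartitionOf n (mergeSingles π i j) := merge_partition hπ hij hi hj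
  refine ⟨⟨hπ, hnc⟩, i, j, hij, hi, hj, Mpart, ?_⟩
  -- noncrossing of merged partition
  rintro ⟨A, hA, B, hB, hAB, a, ha, b, hb, c, hc, d, hd, h1, h2, h3⟩
  apply hNCm.2
  -- map blocks of merged partition into the merged image partition
  have map_mem : ∀ C ∈ mergeSingles π i j,
      fmap n C ∈ mergeSingles (π.image (fmap n)) i j := by
    intro C hC
    unfold mergeSingles at hC ⊢
    rcases Finset.mem_insert.mp hC with rfl | hC
    · have h1ij : (1 : ℕ) ∉ ({i, j} : Finset ℕ) := by
        simp only [Finset.mem_insert, Finset.mem_singleton]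
        push_neg
        exact ⟨fun h => hi1 h.symm, fun h => hj1 h.symm⟩
      have : fmap n {i, j} = {i, j} := if_neg h1ij
      rw [this]
      exact Finset.mem_insert_self _ _
    · rw [Finset.mem_erase, Finset.mem_erase] at hC
      obtain ⟨hCj, hCi, hCπ⟩ := hC
      refine Finset.mem_insert_of_mem ?_
      rw [Finset.mem_erase, Finset.mem_erase]
      have hsub : C ⊆ fmap n C := subset_fmap n C
      have hne : C.Nonempty := hπ.1 C hCπ
      refine ⟨?_, ?_, Finset.mem_image_of_mem _ hCπ⟩
      · intro h'
        apply hCj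
        have : C ⊆ {j} := h' ▸ hsub
        rcases Finset.subset_singleton_iff.mp this with h'' | h''
        · exact absurd h'' hne.ne_empty
        · exact h''
      · intro h'
        apply hCi
        have : C ⊆ {i} := h' ▸ hsub
        rcases Finset.subset_singleton_iff.mp this with h'' | h''
        · exact absurd h'' hne.ne_empty
        · exact h''
  have hfne : fmap n A ≠ fmap n B := by
    intro h'
    have haa : a ≤ n := (mem_bound Mpart hA ha).2
    have : a ∈ B := mem_fmap_of_ne (h' ▸ subset_fmap n A ha) (by omega)
    exact hAB (blocks_eq Mpart hA hB ha this)
  exact ⟨fmap n A, map_mem A hA, fmap n B, map_mem B hB, hfne,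
    a, subset_fmap n A ha, b, subset_fmap n A hb,
    c, subset_fmap n B hc, d, subset_fmap n B hd, h1, h2, h3⟩

lemma image_erase_eq {n : ℕ} {π : Finset (Finset ℕ)} (h : IsPartitionOf n π) :
    (π.image (fmap n)).image (fun A => A.erase (n + 1)) = π := by
  rw [Finset.image_image]
  have : ∀ A ∈ π, ((fun A => A.erase (n + 1)) ∘ fmap n) A = id A := by
    intro A hA
    exact erase_fmap (notMem_succ h hA)
  rw [Finset.image_congr this, Finset.image_id]

end LonelyAux

theorem stmt2 (n : ℕ) (hn : 1 ≤ n) :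
    (∀ π : Finset (Finset ℕ), IsLonely n π →
      IsLonely (n + 1) (π.image fun A => if 1 ∈ A then insert (n + 1) A else A)) ∧
    (∀ π πQ : Finset (Finset ℕ), IsLonely n π → IsLonely n πQ →
      (π.image fun A => if 1 ∈ A then insert (n + 1) A else A) =
        (πQ.image fun A => if 1 ∈ A then insert (n + 1) A else A) → π = πQ) := by
  have hfeq : (fun A : Finset ℕ => if 1 ∈ A then insert (n + 1) A else A) =
      LonelyAux.fmap n := rfl
  constructor
  · rintro π ⟨⟨hpart, hnc⟩, hnm⟩
    rw [hfeq]
    exact ⟨⟨LonelyAux.image_partition hn hpart, LonelyAux.image_noncrossing hn hpart hnc⟩,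
      fun hm => hnm (LonelyAux.transfer hn hpart hnc hm)⟩
  · rintro π πQ ⟨⟨hpart, _⟩, _⟩ ⟨⟨hpartQ, _⟩, _⟩ heq
    rw [hfeq] at heq
    rw [← LonelyAux.image_erase_eq hpart, heq, LonelyAux.image_erase_eq hpartQ]
end

section
/- The sequence (L_n) of numbers of lonely singles partitions is strictly increasing for n ≥ 2: L_n < L_{n+1} for all n ≥ 2. -/
section Aux

private def gmap (n : ℕ) (A : Finset ℕ) : Finset ℕ := if n ∈ A then insert (n+1) A else A

private def fmap (n : ℕ) (π : Finset (Finset ℕ)) : Finset (Finset ℕ) := π.image (gmap n)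

private lemma gmap_subset (n : ℕ) (A : Finset ℕ) : A ⊆ gmap n A := by
  unfold gmap; split
  · exact Finset.subset_insert _ _
  · exact Finset.Subset.refl _

private lemma mem_gmap {n x : ℕ} {A : Finset ℕ} :
    x ∈ gmap n A ↔ x ∈ A ∨ (x = n+1 ∧ n ∈ A) := by
  unfold gmap; split
  · simp only [Finset.mem_insert]; tauto
  · tauto

private lemma blocks_subset {n : ℕ} {π : Finset (Finset ℕ)} (h : IsPartitionOf n π)
    {A : Finset ℕ} (hA : A ∈ π) : A ⊆ Finset.Icc 1 n := fun x hx =>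
  (h.2.2 x).mpr ⟨A, hA, hx⟩

private lemma gmap_inj {n : ℕ} {σ : Finset (Finset ℕ)}
    (hdisj : ∀ A ∈ σ, ∀ B ∈ σ, A ≠ B → Disjoint A B)
    (hsub : ∀ A ∈ σ, A ⊆ Finset.Icc 1 n)
    {A B : Finset ℕ} (hA : A ∈ σ) (hB : B ∈ σ) (heq : gmap n A = gmap n B) : A = B := by
  by_contra hne
  have hd := hdisj A hA B hB hne
  by_cases hnA : n ∈ A <;> by_cases hnB : n ∈ B
  · exact Finset.disjoint_left.mp hd hnA hnB
  · have h1 : n+1 ∈ gmap n A := mem_gmap.mpr (Or.inr ⟨rfl, hnA⟩)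
    rw [heq] at h1
    rcases mem_gmap.mp h1 with h | ⟨_, h⟩
    · have := hsub B hB h; simp [Finset.mem_Icc] at this
    · exact hnB h
  · have h1 : n+1 ∈ gmap n B := mem_gmap.mpr (Or.inr ⟨rfl, hnB⟩)
    rw [← heq] at h1
    rcases mem_gmap.mp h1 with h | ⟨_, h⟩
    · have := hsub A hA h; simp [Finset.mem_Icc] at this
    · exact hnA h
  · unfold gmap at heq; rw [if_neg hnA, if_neg hnB] at heq; exact hne heq

private lemma crossing_image {n : ℕ} {σ : Finset (Finset ℕ)}
    (hdisj : ∀ A ∈ σ, ∀ B ∈ σ, A ≠ B → Disjoint A B)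
    (hsub : ∀ A ∈ σ, A ⊆ Finset.Icc 1 n)
    (hc : Crossing σ) : Crossing (σ.image (gmap n)) := by
  obtain ⟨A, hA, B, hB, hAB, a, ha, b, hb, c, hc', d, hd, h1, h2, h3⟩ := hc
  exact ⟨gmap n A, Finset.mem_image_of_mem _ hA, gmap n B, Finset.mem_image_of_mem _ hB,
    fun h => hAB (gmap_inj hdisj hsub hA hB h),
    a, gmap_subset n A ha, b, gmap_subset n A hb, c, gmap_subset n B hc', d, gmap_subset n B hd,
    h1, h2, h3⟩

private lemma fmap_partition {n : ℕ} {π : Finset (Finset ℕ)} (hn : 1 ≤ n)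
    (h : IsPartitionOf n π) : IsPartitionOf (n+1) (fmap n π) := by
  obtain ⟨hne, hdisj, hcov⟩ := h
  have hsub : ∀ A ∈ π, A ⊆ Finset.Icc 1 n := fun A hA => blocks_subset ⟨hne, hdisj, hcov⟩ hA
  refine ⟨?_, ?_, ?_⟩
  · rintro A hA
    rw [fmap, Finset.mem_image] at hA
    obtain ⟨B, hB, rfl⟩ := hA
    exact (hne B hB).mono (gmap_subset n B)
  · rintro A hA B hB hAB
    rw [fmap, Finset.mem_image] at hA hB
    obtain ⟨A', hA', rfl⟩ := hA
    obtain ⟨B', hB', rfl⟩ := hB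
    have hne' : A' ≠ B' := fun h => hAB (by rw [h])
    have hd := hdisj A' hA' B' hB' hne'
    rw [Finset.disjoint_left]
    intro x hx hx'
    rcases mem_gmap.mp hx with h1 | ⟨rfl, h1⟩ <;> rcases mem_gmap.mp hx' with h2 | ⟨h2, h2'⟩
    · exact Finset.disjoint_left.mp hd h1 h2
    · subst h2; have := hsub A' hA' h1; simp [Finset.mem_Icc] at this
    · have := hsub B' hB' h2; simp [Finset.mem_Icc] at this
    · exact Finset.disjoint_left.mp hd h1 h2'
  · intro x
    constructor
    · intro hx
      simp only [Finset.mem_Icc] at hx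
      by_cases hxn : x ≤ n
      · obtain ⟨A, hA, hxA⟩ := (hcov x).mp (by simp [Finset.mem_Icc]; omega)
        exact ⟨gmap n A, Finset.mem_image_of_mem _ hA, gmap_subset n A hxA⟩
      · have hx1 : x = n+1 := by omega
        obtain ⟨B, hB, hnB⟩ := (hcov n).mp (by simp [Finset.mem_Icc]; omega)
        exact ⟨gmap n B, Finset.mem_image_of_mem _ hB, mem_gmap.mpr (Or.inr ⟨hx1, hnB⟩)⟩
    · rintro ⟨A, hA, hxA⟩
      rw [fmap, Finset.mem_image] at hA
      obtain ⟨A', hA', rfl⟩ := hA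
      rcases mem_gmap.mp hxA with h | ⟨rfl, _⟩
      · have := hsub A' hA' h; simp only [Finset.mem_Icc] at this ⊢; omega
      · simp [Finset.mem_Icc]

private lemma fmap_noncross {n : ℕ} {π : Finset (Finset ℕ)} (hp : IsPartitionOf n π)
    (hnc : ¬ Crossing π) : ¬ Crossing (fmap n π) := by
  intro hc
  apply hnc
  obtain ⟨A, hA, B, hB, hAB, a, ha, b, hb, c, hc', d, hd, h1, h2, h3⟩ := hc
  rw [fmap, Finset.mem_image] at hA hB
  obtain ⟨A', hA', rfl⟩ := hA
  obtain ⟨B', hB', rfl⟩ := hB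
  have hne' : A' ≠ B' := fun h => hAB (by rw [h])
  have hsub : ∀ X ∈ π, X ⊆ Finset.Icc 1 n := fun X hX => blocks_subset hp hX
  -- all of a, b, c are < d ≤ n+1, so they are ≤ n, hence in the original blocks
  have hd' : d ≤ n + 1 := by
    rcases mem_gmap.mp hd with h | ⟨rfl, _⟩
    · have := hsub B' hB' h; simp [Finset.mem_Icc] at this; omega
    · exact le_refl _
  have ha' : a ∈ A' := by
    rcases mem_gmap.mp ha with h | ⟨rfl, _⟩
    · exact h
    · omega
  have hb' : b ∈ A' := by
    rcases mem_gmap.mp hb with h | ⟨rfl, _⟩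
    · exact h
    · omega
  have hc'' : c ∈ B' := by
    rcases mem_gmap.mp hc' with h | ⟨rfl, _⟩
    · exact h
    · omega
  rcases mem_gmap.mp hd with h | ⟨rfl, hnB'⟩
  · exact ⟨A', hA', B', hB', hne', a, ha', b, hb', c, hc'', d, h, h1, h2, h3⟩
  · -- d = n+1 and n ∈ B'
    have hbn : b ≠ n := by
      intro h; subst h
      exact Finset.disjoint_left.mp (hp.2.1 A' hA' B' hB' hne') hb' hnB'
    have hbln : b < n := by
      have := hsub A' hA' hb'; simp [Finset.mem_Icc] at this; omega
    exact ⟨A', hA', B', hB', hne', a, ha', b, hb', c, hc'', n, hnB', h1, h2, hbln⟩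

private lemma gmap_eq_singleton {n x : ℕ} {Y : Finset ℕ} (h : gmap n Y = {x}) :
    Y = {x} ∧ n ∉ Y := by
  unfold gmap at h
  split at h
  · next hn =>
    exfalso
    have h1 : n + 1 ∈ ({x} : Finset ℕ) := h ▸ Finset.mem_insert_self _ _
    have h2 : n ∈ ({x} : Finset ℕ) := h ▸ Finset.mem_insert_of_mem hn
    simp only [Finset.mem_singleton] at h1 h2
    omega
  · next hn => exact ⟨h, hn⟩

private lemma singleton_mem_fmap {n i : ℕ} {π : Finset (Finset ℕ)}
    (h : ({i} : Finset ℕ) ∈ fmap n π) : ({i} : Finset ℕ) ∈ π ∧ i ≠ n := by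
  rw [fmap, Finset.mem_image] at h
  obtain ⟨A, hA, hgA⟩ := h
  obtain ⟨rfl, hnA⟩ := gmap_eq_singleton hgA
  exact ⟨hA, fun h => hnA (by rw [h]; exact Finset.mem_singleton_self _)⟩

private lemma merge_partition {n i j : ℕ} {π : Finset (Finset ℕ)} (hp : IsPartitionOf n π)
    (hij : i ≠ j) (hi : ({i} : Finset ℕ) ∈ π) (hj : ({j} : Finset ℕ) ∈ π) :
    IsPartitionOf n (mergeSingles π i j) := by
  obtain ⟨hne, hdisj, hcov⟩ := hp
  have hmem : ∀ X, X ∈ mergeSingles π i j ↔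
      X = {i, j} ∨ (X ≠ {i} ∧ X ≠ {j} ∧ X ∈ π) := by
    intro X
    simp only [mergeSingles, Finset.mem_insert, Finset.mem_erase]
    tauto
  refine ⟨?_, ?_, ?_⟩
  · intro A hA
    rcases (hmem A).mp hA with rfl | ⟨_, _, hA⟩
    · exact ⟨i, by simp⟩
    · exact hne A hA
  · intro A hA B hB hAB
    rw [Finset.disjoint_left]
    intro x hxA hxB
    rcases (hmem A).mp hA with rfl | ⟨hAi, hAj, hA'⟩ <;>
      rcases (hmem B).mp hB with rfl | ⟨hBi, hBj, hB'⟩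
    · exact hAB rfl
    · rcases Finset.mem_insert.mp hxA with rfl | hx
      · exact Finset.disjoint_left.mp (hdisj {x} hi B hB' (Ne.symm hBi)) (Finset.mem_singleton_self x) hxB
      · rw [Finset.mem_singleton] at hx; subst hx
        exact Finset.disjoint_left.mp (hdisj {x} hj B hB' (Ne.symm hBj)) (Finset.mem_singleton_self x) hxB
    · rcases Finset.mem_insert.mp hxB with rfl | hx
      · exact Finset.disjoint_left.mp (hdisj {x} hi A hA' (Ne.symm hAi)) (Finset.mem_singleton_self x) hxA
      · rw [Finset.mem_singleton] at hx; subst hx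
        exact Finset.disjoint_left.mp (hdisj {x} hj A hA' (Ne.symm hAj)) (Finset.mem_singleton_self x) hxA
    · exact Finset.disjoint_left.mp (hdisj A hA' B hB' hAB) hxA hxB
  · intro x
    rw [hcov x]
    constructor
    · rintro ⟨A, hA, hxA⟩
      by_cases hAi : A = {i}
      · subst hAi
        rw [Finset.mem_singleton] at hxA; subst hxA
        exact ⟨{x, j}, (hmem _).mpr (Or.inl rfl), by simp⟩
      by_cases hAj : A = {j}
      · subst hAj
        rw [Finset.mem_singleton] at hxA; subst hxA
        exact ⟨{i, x}, (hmem _).mpr (Or.inl rfl), by simp⟩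
      · exact ⟨A, (hmem A).mpr (Or.inr ⟨hAi, hAj, hA⟩), hxA⟩
    · rintro ⟨A, hA, hxA⟩
      rcases (hmem A).mp hA with rfl | ⟨_, _, hA'⟩
      · rcases Finset.mem_insert.mp hxA with rfl | hx
        · exact ⟨{x}, hi, Finset.mem_singleton_self x⟩
        · rw [Finset.mem_singleton] at hx; subst hx
          exact ⟨{x}, hj, Finset.mem_singleton_self x⟩
      · exact ⟨A, hA', hxA⟩

private lemma fmap_merge {n i j : ℕ} {π : Finset (Finset ℕ)}
    (hin : i ≠ n) (hjn : j ≠ n) :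
    mergeSingles (fmap n π) i j = (mergeSingles π i j).image (gmap n) := by
  have hgij : gmap n ({i, j} : Finset ℕ) = {i, j} := by
    unfold gmap
    rw [if_neg]
    simp only [Finset.mem_insert, Finset.mem_singleton]
    push_neg
    exact ⟨fun h => hin h.symm, fun h => hjn h.symm⟩
  have hgi : gmap n ({i} : Finset ℕ) = {i} := by
    unfold gmap; rw [if_neg]
    intro h; rw [Finset.mem_singleton] at h; exact hin h.symm
  have hgj : gmap n ({j} : Finset ℕ) = {j} := by
    unfold gmap; rw [if_neg]
    intro h; rw [Finset.mem_singleton] at h; exact hjn h.symm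
  ext X
  simp only [mergeSingles, Finset.mem_insert, Finset.mem_erase, Finset.mem_image, fmap]
  constructor
  · rintro (rfl | ⟨hXj, hXi, Y, hY, rfl⟩)
    · exact ⟨{i, j}, Or.inl rfl, hgij⟩
    · refine ⟨Y, Or.inr ⟨?_, ?_, hY⟩, rfl⟩
      · intro h; subst h; exact hXj hgj
      · intro h; subst h; exact hXi hgi
  · rintro ⟨Y, (rfl | ⟨hYi, hYj, hY⟩), rfl⟩
    · exact Or.inl hgij
    · refine Or.inr ⟨?_, ?_, Y, hY, rfl⟩
      · intro h; exact hYi ((gmap_eq_singleton h).1)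
      · intro h; exact hYj ((gmap_eq_singleton h).1)

private lemma fmap_lonely {n : ℕ} (hn : 1 ≤ n) {π : Finset (Finset ℕ)}
    (h : IsLonely n π) : IsLonely (n+1) (fmap n π) := by
  obtain ⟨⟨hp, hnc⟩, hnm⟩ := h
  refine ⟨⟨fmap_partition hn hp, fmap_noncross hp hnc⟩, ?_⟩
  rintro ⟨_, i, j, hij, hi, hj, hmp', hmnc'⟩
  obtain ⟨hi', hin⟩ := singleton_mem_fmap hi
  obtain ⟨hj', hjn⟩ := singleton_mem_fmap hj
  apply hnm
  refine ⟨⟨hp, hnc⟩, i, j, hij, hi', hj', ?_, ?_⟩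
  · exact merge_partition hp hij hi' hj'
  · intro hcross
    apply hmnc'
    rw [fmap_merge hin hjn]
    have hmp : IsPartitionOf n (mergeSingles π i j) := merge_partition hp hij hi' hj'
    exact crossing_image hmp.2.1 (fun A hA => blocks_subset hmp hA) hcross

private lemma fmap_recover {n : ℕ} {π : Finset (Finset ℕ)} (hp : IsPartitionOf n π) :
    (fmap n π).image (fun A => A.erase (n+1)) = π := by
  rw [fmap, Finset.image_image]
  have heq : ∀ A ∈ π, ((fun A => A.erase (n+1)) ∘ gmap n) A = id A := by
    intro A hA
    have hn1 : n+1 ∉ A := by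
      intro h
      have := blocks_subset hp hA h
      simp [Finset.mem_Icc] at this
    simp only [Function.comp_apply, id_eq]
    unfold gmap
    split
    · exact Finset.erase_insert hn1
    · exact Finset.erase_eq_of_notMem hn1
  rw [Finset.image_congr heq, Finset.image_id]

private lemma fmap_injOn {n : ℕ} : Set.InjOn (fmap n) {π | IsLonely n π} := by
  intro π1 h1 π2 h2 heq
  rw [← fmap_recover h1.1.1, ← fmap_recover h2.1.1, heq]

private lemma lonely_finite (m : ℕ) : {π : Finset (Finset ℕ) | IsLonely m π}.Finite := by
  apply Set.Finite.subset (Finset.finite_toSet ((Finset.Icc 1 m).powerset.powerset))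
  intro π hπ
  simp only [Finset.coe_powerset, Set.mem_preimage, Set.mem_powerset_iff, Finset.coe_subset,
    Finset.mem_coe, Finset.mem_powerset]
  intro A hA
  rw [Set.mem_preimage, Set.mem_powerset_iff, Finset.coe_subset]
  exact blocks_subset hπ.1.1 (Finset.mem_coe.mp hA)

private lemma base_lonely {n : ℕ} (hn : 2 ≤ n) :
    IsLonely (n+1) ({Finset.Icc 1 n, {n+1}} : Finset (Finset ℕ)) := by
  have hne : Finset.Icc 1 n ≠ ({n+1} : Finset ℕ) := by
    intro h
    have : (n:ℕ) + 1 ∈ Finset.Icc 1 n := h ▸ Finset.mem_singleton_self _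
    simp [Finset.mem_Icc] at this
  constructor
  · constructor
    · refine ⟨?_, ?_, ?_⟩
      · intro A hA
        rcases Finset.mem_insert.mp hA with rfl | hA
        · exact Finset.nonempty_Icc.mpr (by omega)
        · rw [Finset.mem_singleton] at hA; subst hA; exact Finset.singleton_nonempty _
      · intro A hA B hB hAB
        rcases Finset.mem_insert.mp hA with rfl | hA <;>
          rcases Finset.mem_insert.mp hB with rfl | hB
        · exact absurd rfl hAB
        · rw [Finset.mem_singleton] at hB; subst hB
          rw [Finset.disjoint_singleton_right]
          simp [Finset.mem_Icc]
        · rw [Finset.mem_singleton] at hA; subst hA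
          rw [Finset.disjoint_singleton_left]
          simp [Finset.mem_Icc]
        · rw [Finset.mem_singleton] at hA hB; subst hA; subst hB; exact absurd rfl hAB
      · intro x
        constructor
        · intro hx
          simp only [Finset.mem_Icc] at hx
          by_cases hxn : x ≤ n
          · exact ⟨Finset.Icc 1 n, Finset.mem_insert_self _ _,
              by simp [Finset.mem_Icc]; omega⟩
          · have : x = n+1 := by omega
            subst this
            exact ⟨{n+1}, by simp, Finset.mem_singleton_self _⟩
        · rintro ⟨A, hA, hxA⟩
          rcases Finset.mem_insert.mp hA with rfl | hA
          · simp only [Finset.mem_Icc] at hxA ⊢; omega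
          · rw [Finset.mem_singleton] at hA; subst hA
            rw [Finset.mem_singleton] at hxA; subst hxA
            simp [Finset.mem_Icc]
    · rintro ⟨A, hA, B, hB, hAB, a, ha, b, hb, c, hc, d, hd, h1, h2, h3⟩
      rcases Finset.mem_insert.mp hA with rfl | hA <;>
        rcases Finset.mem_insert.mp hB with rfl | hB
      · exact hAB rfl
      · rw [Finset.mem_singleton] at hB; subst hB
        rw [Finset.mem_singleton] at hc hd; subst hc; subst hd; omega
      · rw [Finset.mem_singleton] at hA; subst hA
        rw [Finset.mem_singleton] at ha hb; subst ha; subst hb; omega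
      · rw [Finset.mem_singleton] at hA hB; subst hA; subst hB; exact hAB rfl
  · rintro ⟨_, i, j, hij, hi, hj, _⟩
    have key : ∀ k : ℕ, ({k} : Finset ℕ) ∈ ({Finset.Icc 1 n, {n+1}} : Finset (Finset ℕ)) →
        k = n+1 := by
      intro k hk
      rcases Finset.mem_insert.mp hk with h | h
      · exfalso
        have : (Finset.Icc 1 n).card = 1 := by rw [← h]; exact Finset.card_singleton _
        rw [Nat.card_Icc] at this
        omega
      · rw [Finset.mem_singleton] at h
        have : k ∈ ({n+1} : Finset ℕ) := h ▸ Finset.mem_singleton_self _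
        rwa [Finset.mem_singleton] at this
    have := key i hi
    have := key j hj
    omega

end Aux

theorem stmt3 (n : ℕ) (hn : 2 ≤ n) : Lnum n < Lnum (n + 1) := by
  have hn1 : 1 ≤ n := by omega
  have hfin := lonely_finite (n+1)
  have hsub : fmap n '' {π : Finset (Finset ℕ) | IsLonely n π}
      ⊂ {π : Finset (Finset ℕ) | IsLonely (n+1) π} := by
    constructor
    · rintro π' ⟨π, hπ, rfl⟩
      exact fmap_lonely hn1 hπ
    · intro hge
      have hbase : ({Finset.Icc 1 n, {n+1}} : Finset (Finset ℕ)) ∈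
          {π : Finset (Finset ℕ) | IsLonely (n+1) π} := base_lonely hn
      obtain ⟨π, hπ, heq⟩ := hge hbase
      have hp : IsPartitionOf n π := hπ.1.1
      obtain ⟨B₀, hB₀, hnB₀⟩ := (hp.2.2 n).mp (by simp [Finset.mem_Icc]; omega)
      have h1 : n ∈ gmap n B₀ := gmap_subset n B₀ hnB₀
      have h2 : n+1 ∈ gmap n B₀ := mem_gmap.mpr (Or.inr ⟨rfl, hnB₀⟩)
      have h3 : gmap n B₀ ∈ fmap n π := Finset.mem_image_of_mem _ hB₀
      rw [heq] at h3
      rcases Finset.mem_insert.mp h3 with h | h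
      · rw [h] at h2; simp [Finset.mem_Icc] at h2
      · rw [Finset.mem_singleton] at h
        rw [h, Finset.mem_singleton] at h1
        omega
  have hlt := Set.ncard_lt_ncard hsub hfin
  rw [Set.ncard_image_of_injOn fmap_injOn] at hlt
  exact hlt
end

section
/- For all n ≥ 0, C_n + 3·M_n ≤ M_{n+2}, where C_n is the number of noncrossing partitions of [n] and M_n is the number of marriageable singles partitions of [n]. -/
namespace NCAux

variable {n : ℕ} {π : Finset (Finset ℕ)}

lemma bd (h : IsPartitionOf n π) {A : Finset ℕ} (hA : A ∈ π) {x : ℕ} (hx : x ∈ A) :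
    1 ≤ x ∧ x ≤ n := by
  have := (h.2.2 x).mpr ⟨A, hA, hx⟩
  simpa [Finset.mem_Icc] using this

lemma block_eq (h : IsPartitionOf n π) {A B : Finset ℕ} (hA : A ∈ π) (hB : B ∈ π)
    {x : ℕ} (hxA : x ∈ A) (hxB : x ∈ B) : A = B := by
  by_contra hne
  exact (Finset.disjoint_left.mp (h.2.1 A hA B hB hne)) hxA hxB

lemma ncross (h : ¬ Crossing π) {A B : Finset ℕ} (hA : A ∈ π) (hB : B ∈ π) (hAB : A ≠ B)
    {a b c d : ℕ} (ha : a ∈ A) (hb : b ∈ A) (hc : c ∈ B) (hd : d ∈ B)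
    (h1 : a < c) (h2 : c < b) (h3 : b < d) : False :=
  h ⟨A, hA, B, hB, hAB, a, ha, b, hb, c, hc, d, hd, h1, h2, h3⟩

lemma not_mem_self (h : IsPartitionOf n π) {m : ℕ} (hm : n < m) : ({m} : Finset ℕ) ∉ π := by
  intro hmem
  have := (bd h hmem (Finset.mem_singleton_self m)).2
  omega

lemma mergeSingles_comm (π : Finset (Finset ℕ)) (i j : ℕ) :
    mergeSingles π i j = mergeSingles π j i := by
  unfold mergeSingles
  rw [Finset.pair_comm, Finset.erase_right_comm]

/-- erase/image commute when fibers over `f x` are trivial. -/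
lemma erase_image {α β : Type*} [DecidableEq α] [DecidableEq β] (f : α → β) (s : Finset α)
    (x : α) (hinj : ∀ B ∈ s, f B = f x → B = x) :
    (s.erase x).image f = (s.image f).erase (f x) := by
  ext A
  simp only [Finset.mem_image, Finset.mem_erase]
  constructor
  · rintro ⟨B, ⟨hBx, hBs⟩, rfl⟩
    exact ⟨fun hfe => hBx (hinj B hBs hfe), B, hBs, rfl⟩
  · rintro ⟨hAx, B, hBs, rfl⟩
    exact ⟨B, ⟨fun h => hAx (by rw [h]), hBs⟩, rfl⟩

end NCAux
namespace NCAux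

def fblk (n : ℕ) (B : Finset ℕ) : Finset ℕ := if n ∈ B then insert (n+1) B else B
def shiftB (B : Finset ℕ) : Finset ℕ := B.image (· + 1)
def f0map (n : ℕ) (π : Finset (Finset ℕ)) : Finset (Finset ℕ) := insert {n+1} (insert {n+2} π)
def f1map (n : ℕ) (π : Finset (Finset ℕ)) : Finset (Finset ℕ) := insert {n+1, n+2} π
def f2map (n : ℕ) (π : Finset (Finset ℕ)) : Finset (Finset ℕ) := insert {1, n+2} (π.image shiftB)
def f3map (n : ℕ) (π : Finset (Finset ℕ)) : Finset (Finset ℕ) := insert {n+2} (π.image (fblk n))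

variable {n : ℕ} {π : Finset (Finset ℕ)}

lemma mem_fblk {B : Finset ℕ} {x : ℕ} (hx : x ∈ fblk n B) : x = n + 1 ∨ x ∈ B := by
  unfold fblk at hx
  split at hx
  · rcases Finset.mem_insert.mp hx with h | h
    · exact Or.inl h
    · exact Or.inr h
  · exact Or.inr hx

lemma mem_fblk_of_mem {B : Finset ℕ} {x : ℕ} (hx : x ∈ B) : x ∈ fblk n B := by
  unfold fblk; split <;> simp [hx]

lemma L_hi2 (h : IsNCPartition n π) : IsNCPartition (n+2) (f1map n π) := by
  obtain ⟨hp, hcr⟩ := h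
  constructor
  · refine ⟨?_, ?_, ?_⟩
    · intro A hA
      rcases Finset.mem_insert.mp hA with rfl | hA
      · exact ⟨n+1, by simp⟩
      · exact hp.1 A hA
    · intro A hA B hB hAB
      rcases Finset.mem_insert.mp hA with rfl | hA <;>
        rcases Finset.mem_insert.mp hB with rfl | hB
      · exact absurd rfl hAB
      · rw [Finset.disjoint_left]
        intro x hx hxB
        have := (bd hp hB hxB).2
        simp only [Finset.mem_insert, Finset.mem_singleton] at hx
        omega
      · rw [Finset.disjoint_left]
        intro x hxA hx
        have := (bd hp hA hxA).2
        simp only [Finset.mem_insert, Finset.mem_singleton] at hx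
        omega
      · exact hp.2.1 A hA B hB hAB
    · intro x
      constructor
      · intro hx
        rw [Finset.mem_Icc] at hx
        by_cases hxn : x ≤ n
        · obtain ⟨A, hA, hxA⟩ := (hp.2.2 x).mp (Finset.mem_Icc.mpr ⟨hx.1, hxn⟩)
          exact ⟨A, Finset.mem_insert_of_mem hA, hxA⟩
        · refine ⟨{n+1, n+2}, Finset.mem_insert_self _ _, ?_⟩
          simp only [Finset.mem_insert, Finset.mem_singleton]
          omega
      · rintro ⟨A, hA, hxA⟩
        rcases Finset.mem_insert.mp hA with rfl | hA
        · simp only [Finset.mem_insert, Finset.mem_singleton] at hxA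
          rw [Finset.mem_Icc]; omega
        · have := bd hp hA hxA
          rw [Finset.mem_Icc]; omega
  · rintro ⟨A, hA, B, hB, hAB, a, ha, b, hb, c, hc, d, hd, h1, h2, h3⟩
    rcases Finset.mem_insert.mp hA with rfl | hA <;>
      rcases Finset.mem_insert.mp hB with rfl | hB
    · exact hAB rfl
    · have := (bd hp hB hc).2
      simp only [Finset.mem_insert, Finset.mem_singleton] at ha
      omega
    · have := (bd hp hA hb).2
      simp only [Finset.mem_insert, Finset.mem_singleton] at hc
      omega
    · exact ncross hcr hA hB hAB ha hb hc hd h1 h2 h3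

lemma L_hi11 (h : IsNCPartition n π) : IsNCPartition (n+2) (f0map n π) := by
  obtain ⟨hp, hcr⟩ := h
  constructor
  · refine ⟨?_, ?_, ?_⟩
    · intro A hA
      rcases Finset.mem_insert.mp hA with rfl | hA
      · exact ⟨n+1, by simp⟩
      rcases Finset.mem_insert.mp hA with rfl | hA
      · exact ⟨n+2, by simp⟩
      · exact hp.1 A hA
    · intro A hA B hB hAB
      rw [Finset.disjoint_left]
      intro x hxA hxB
      have hAx : x = n+1 ∨ x = n+2 ∨ (1 ≤ x ∧ x ≤ n) := by
        rcases Finset.mem_insert.mp hA with rfl | hA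
        · simp only [Finset.mem_singleton] at hxA; omega
        rcases Finset.mem_insert.mp hA with rfl | hA
        · simp only [Finset.mem_singleton] at hxA; omega
        · have := bd hp hA hxA; omega
      have hBx : x = n+1 ∨ x = n+2 ∨ (1 ≤ x ∧ x ≤ n) := by
        rcases Finset.mem_insert.mp hB with rfl | hB
        · simp only [Finset.mem_singleton] at hxB; omega
        rcases Finset.mem_insert.mp hB with rfl | hB
        · simp only [Finset.mem_singleton] at hxB; omega
        · have := bd hp hB hxB; omega
      -- x determines the block
      rcases Finset.mem_insert.mp hA with rfl | hA' <;>
        rcases Finset.mem_insert.mp hB with rfl | hB'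
      · exact hAB rfl
      · rcases Finset.mem_insert.mp hB' with rfl | hB''
        · simp only [Finset.mem_singleton] at hxA hxB; omega
        · simp only [Finset.mem_singleton] at hxA
          have := bd hp hB'' hxB; omega
      · rcases Finset.mem_insert.mp hA' with rfl | hA''
        · simp only [Finset.mem_singleton] at hxA hxB; omega
        · simp only [Finset.mem_singleton] at hxB
          have := bd hp hA'' hxA; omega
      · rcases Finset.mem_insert.mp hA' with rfl | hA'' <;>
          rcases Finset.mem_insert.mp hB' with rfl | hB''
        · exact hAB rfl
        · simp only [Finset.mem_singleton] at hxA
          have := bd hp hB'' hxB; omega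
        · simp only [Finset.mem_singleton] at hxB
          have := bd hp hA'' hxA; omega
        · exact (Finset.disjoint_left.mp (hp.2.1 A hA'' B hB'' hAB)) hxA hxB
    · intro x
      constructor
      · intro hx
        rw [Finset.mem_Icc] at hx
        by_cases hxn : x ≤ n
        · obtain ⟨A, hA, hxA⟩ := (hp.2.2 x).mp (Finset.mem_Icc.mpr ⟨hx.1, hxn⟩)
          exact ⟨A, Finset.mem_insert_of_mem (Finset.mem_insert_of_mem hA), hxA⟩
        · by_cases hx1 : x = n+1
          · exact ⟨{n+1}, Finset.mem_insert_self _ _, by simp [hx1]⟩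
          · refine ⟨{n+2}, Finset.mem_insert_of_mem (Finset.mem_insert_self _ _), ?_⟩
            simp only [Finset.mem_singleton]; omega
      · rintro ⟨A, hA, hxA⟩
        rw [Finset.mem_Icc]
        rcases Finset.mem_insert.mp hA with rfl | hA
        · simp only [Finset.mem_singleton] at hxA; omega
        rcases Finset.mem_insert.mp hA with rfl | hA
        · simp only [Finset.mem_singleton] at hxA; omega
        · have := bd hp hA hxA; omega
  · rintro ⟨A, hA, B, hB, hAB, a, ha, b, hb, c, hc, d, hd, h1, h2, h3⟩
    rcases Finset.mem_insert.mp hA with rfl | hA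
    · simp only [Finset.mem_singleton] at ha hb; omega
    rcases Finset.mem_insert.mp hA with rfl | hA
    · simp only [Finset.mem_singleton] at ha hb; omega
    rcases Finset.mem_insert.mp hB with rfl | hB
    · simp only [Finset.mem_singleton] at hc hd; omega
    rcases Finset.mem_insert.mp hB with rfl | hB
    · simp only [Finset.mem_singleton] at hc hd; omega
    exact ncross hcr hA hB hAB ha hb hc hd h1 h2 h3

end NCAux
namespace NCAux

variable {n : ℕ} {π : Finset (Finset ℕ)}

lemma mem_shiftB {B : Finset ℕ} {x : ℕ} : x ∈ shiftB B ↔ ∃ y ∈ B, y + 1 = x := by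
  unfold shiftB; simp [Finset.mem_image]

lemma L_shift (h : IsNCPartition n π) : IsNCPartition (n+2) (f2map n π) := by
  obtain ⟨hp, hcr⟩ := h
  constructor
  · refine ⟨?_, ?_, ?_⟩
    · intro A hA
      rcases Finset.mem_insert.mp hA with rfl | hA
      · exact ⟨1, by simp⟩
      · obtain ⟨B, hB, rfl⟩ := Finset.mem_image.mp hA
        obtain ⟨y, hy⟩ := hp.1 B hB
        exact ⟨y + 1, mem_shiftB.mpr ⟨y, hy, rfl⟩⟩
    · intro A hA B hB hAB
      rw [Finset.disjoint_left]
      intro x hxA hxB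
      rcases Finset.mem_insert.mp hA with rfl | hA <;>
        rcases Finset.mem_insert.mp hB with rfl | hB
      · exact hAB rfl
      · obtain ⟨C, hC, rfl⟩ := Finset.mem_image.mp hB
        obtain ⟨y, hyC, rfl⟩ := mem_shiftB.mp hxB
        have := bd hp hC hyC
        simp only [Finset.mem_insert, Finset.mem_singleton] at hxA
        omega
      · obtain ⟨C, hC, rfl⟩ := Finset.mem_image.mp hA
        obtain ⟨y, hyC, rfl⟩ := mem_shiftB.mp hxA
        have := bd hp hC hyC
        simp only [Finset.mem_insert, Finset.mem_singleton] at hxB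
        omega
      · obtain ⟨C, hC, rfl⟩ := Finset.mem_image.mp hA
        obtain ⟨D, hD, rfl⟩ := Finset.mem_image.mp hB
        have hCD : C ≠ D := fun he => hAB (by rw [he])
        obtain ⟨y, hyC, rfl⟩ := mem_shiftB.mp hxA
        obtain ⟨z, hzD, hz⟩ := mem_shiftB.mp hxB
        have : z = y := by omega
        subst this
        exact (Finset.disjoint_left.mp (hp.2.1 C hC D hD hCD)) hyC hzD
    · intro x
      constructor
      · intro hx
        rw [Finset.mem_Icc] at hx
        by_cases h1 : x = 1
        · exact ⟨{1, n+2}, Finset.mem_insert_self _ _, by simp [h1]⟩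
        by_cases h2 : x = n + 2
        · refine ⟨{1, n+2}, Finset.mem_insert_self _ _, ?_⟩
          simp only [Finset.mem_insert, Finset.mem_singleton]; omega
        · obtain ⟨A, hA, hxA⟩ := (hp.2.2 (x-1)).mp (Finset.mem_Icc.mpr (by omega))
          refine ⟨shiftB A, Finset.mem_insert_of_mem (Finset.mem_image_of_mem _ hA), ?_⟩
          exact mem_shiftB.mpr ⟨x - 1, hxA, by omega⟩
      · rintro ⟨A, hA, hxA⟩
        rw [Finset.mem_Icc]
        rcases Finset.mem_insert.mp hA with rfl | hA
        · simp only [Finset.mem_insert, Finset.mem_singleton] at hxA; omega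
        · obtain ⟨C, hC, rfl⟩ := Finset.mem_image.mp hA
          obtain ⟨y, hyC, rfl⟩ := mem_shiftB.mp hxA
          have := bd hp hC hyC; omega
  · rintro ⟨A, hA, B, hB, hAB, a, ha, b, hb, c, hc, d, hd, h1, h2, h3⟩
    rcases Finset.mem_insert.mp hA with rfl | hA
    · -- a,b ∈ {1,n+2} : a < c < b so a = 1, b = n+2, need d > n+2
      rcases Finset.mem_insert.mp hB with rfl | hB
      · exact hAB rfl
      · obtain ⟨C, hC, rfl⟩ := Finset.mem_image.mp hB
        obtain ⟨y, hyC, rfl⟩ := mem_shiftB.mp hd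
        have := bd hp hC hyC
        simp only [Finset.mem_insert, Finset.mem_singleton] at ha hb
        omega
    rcases Finset.mem_insert.mp hB with rfl | hB
    · obtain ⟨C, hC, rfl⟩ := Finset.mem_image.mp hA
      obtain ⟨y, hyC, rfl⟩ := mem_shiftB.mp ha
      simp only [Finset.mem_insert, Finset.mem_singleton] at hc hd
      -- c < b < d, c,d ∈ {1,n+2}: c=1 impossible since a ≥ 2; c = n+2 then b > n+2 ≥ d
      obtain ⟨z, hzC, rfl⟩ := mem_shiftB.mp hb
      have hy := bd hp hC hyC
      have hz := bd hp hC hzC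
      omega
    · obtain ⟨C, hC, rfl⟩ := Finset.mem_image.mp hA
      obtain ⟨D, hD, rfl⟩ := Finset.mem_image.mp hB
      have hCD : C ≠ D := fun he => hAB (by rw [he])
      obtain ⟨a', ha', rfl⟩ := mem_shiftB.mp ha
      obtain ⟨b', hb', rfl⟩ := mem_shiftB.mp hb
      obtain ⟨c', hc', rfl⟩ := mem_shiftB.mp hc
      obtain ⟨d', hd', rfl⟩ := mem_shiftB.mp hd
      exact ncross hcr hC hD hCD ha' hb' hc' hd' (by omega) (by omega) (by omega)

end NCAux
namespace NCAux

variable {n : ℕ} {π : Finset (Finset ℕ)}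

lemma fblk_inj_on (hp : IsPartitionOf n π) {B C : Finset ℕ} (hB : B ∈ π) (hC : C ∈ π)
    (he : fblk n B = fblk n C) : B = C := by
  have hB1 : n + 1 ∉ B := fun h => by have := (bd hp hB h).2; omega
  have hC1 : n + 1 ∉ C := fun h => by have := (bd hp hC h).2; omega
  unfold fblk at he
  split at he <;> split at he
  · -- insert (n+1) B = insert (n+1) C
    ext x
    constructor
    · intro hx
      have : x ∈ insert (n+1) C := he ▸ Finset.mem_insert_of_mem hx
      rcases Finset.mem_insert.mp this with rfl | h
      · exact absurd hx hB1
      · exact h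
    · intro hx
      have : x ∈ insert (n+1) B := he ▸ Finset.mem_insert_of_mem hx
      rcases Finset.mem_insert.mp this with rfl | h
      · exact absurd hx hC1
      · exact h
  · exfalso
    exact hC1 (he ▸ Finset.mem_insert_self (n+1) B)
  · exfalso
    refine hB1 ?_
    rw [he]
    exact Finset.mem_insert_self (n+1) C
  · exact he

lemma L_fY (hn : 0 < n) (h : IsNCPartition n π) : IsNCPartition (n+2) (f3map n π) := by
  obtain ⟨hp, hcr⟩ := h
  have hmemf : ∀ {B : Finset ℕ}, B ∈ π → ∀ {x : ℕ}, x ∈ fblk n B →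
      (x = n + 1 ∧ n ∈ B) ∨ (x ∈ B ∧ 1 ≤ x ∧ x ≤ n) := by
    intro B hB x hx
    unfold fblk at hx
    split at hx
    · rcases Finset.mem_insert.mp hx with rfl | h
      · rename_i hnb; exact Or.inl ⟨rfl, hnb⟩
      · exact Or.inr ⟨h, bd hp hB h⟩
    · exact Or.inr ⟨hx, bd hp hB hx⟩
  constructor
  · refine ⟨?_, ?_, ?_⟩
    · intro A hA
      rcases Finset.mem_insert.mp hA with rfl | hA
      · exact ⟨n+2, by simp⟩
      · obtain ⟨B, hB, rfl⟩ := Finset.mem_image.mp hA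
        obtain ⟨y, hy⟩ := hp.1 B hB
        exact ⟨y, mem_fblk_of_mem hy⟩
    · intro A hA B hB hAB
      rw [Finset.disjoint_left]
      intro x hxA hxB
      rcases Finset.mem_insert.mp hA with rfl | hA <;>
        rcases Finset.mem_insert.mp hB with rfl | hB
      · exact hAB rfl
      · obtain ⟨C, hC, rfl⟩ := Finset.mem_image.mp hB
        simp only [Finset.mem_singleton] at hxA
        subst hxA
        rcases hmemf hC hxB with ⟨h1, _⟩ | ⟨_, _, h2⟩ <;> omega
      · obtain ⟨C, hC, rfl⟩ := Finset.mem_image.mp hA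
        simp only [Finset.mem_singleton] at hxB
        subst hxB
        rcases hmemf hC hxA with ⟨h1, _⟩ | ⟨_, _, h2⟩ <;> omega
      · obtain ⟨C, hC, rfl⟩ := Finset.mem_image.mp hA
        obtain ⟨D, hD, rfl⟩ := Finset.mem_image.mp hB
        have hCD : C ≠ D := fun he => hAB (by rw [he])
        have hdisj := Finset.disjoint_left.mp (hp.2.1 C hC D hD hCD)
        rcases hmemf hC hxA with ⟨rfl, hnC⟩ | ⟨hxC, _⟩
        · rcases hmemf hD hxB with ⟨_, hnD⟩ | ⟨hxD, _, hle⟩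
          · exact hdisj hnC hnD
          · omega
        · rcases hmemf hD hxB with ⟨rfl, hnD⟩ | ⟨hxD, _⟩
          · have := (bd hp hC hxC).2; omega
          · exact hdisj hxC hxD
    · intro x
      constructor
      · intro hx
        rw [Finset.mem_Icc] at hx
        by_cases hxn : x ≤ n
        · obtain ⟨A, hA, hxA⟩ := (hp.2.2 x).mp (Finset.mem_Icc.mpr ⟨hx.1, hxn⟩)
          exact ⟨fblk n A, Finset.mem_insert_of_mem (Finset.mem_image_of_mem _ hA),
            mem_fblk_of_mem hxA⟩
        by_cases hx1 : x = n + 1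
        · obtain ⟨A, hA, hnA⟩ := (hp.2.2 n).mp (Finset.mem_Icc.mpr ⟨hn, le_refl n⟩)
          refine ⟨fblk n A, Finset.mem_insert_of_mem (Finset.mem_image_of_mem _ hA), ?_⟩
          unfold fblk
          rw [if_pos hnA]
          simp [hx1]
        · refine ⟨{n+2}, Finset.mem_insert_self _ _, ?_⟩
          simp only [Finset.mem_singleton]; omega
      · rintro ⟨A, hA, hxA⟩
        rw [Finset.mem_Icc]
        rcases Finset.mem_insert.mp hA with rfl | hA
        · simp only [Finset.mem_singleton] at hxA; omega
        · obtain ⟨C, hC, rfl⟩ := Finset.mem_image.mp hA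
          rcases hmemf hC hxA with ⟨h1, _⟩ | ⟨_, h2⟩ <;> omega
  · rintro ⟨A, hA, B, hB, hAB, a, ha, b, hb, c, hc, d, hd, h1, h2, h3⟩
    rcases Finset.mem_insert.mp hA with rfl | hA
    · simp only [Finset.mem_singleton] at ha hb; omega
    rcases Finset.mem_insert.mp hB with rfl | hB
    · simp only [Finset.mem_singleton] at hc hd; omega
    obtain ⟨C, hC, rfl⟩ := Finset.mem_image.mp hA
    obtain ⟨D, hD, rfl⟩ := Finset.mem_image.mp hB
    have hCD : C ≠ D := fun he => hAB (by rw [he])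
    rcases hmemf hD hd with ⟨rfl, hnD⟩ | ⟨hdD, _⟩
    · -- d = n+1, n ∈ D
      rcases hmemf hC hb with ⟨rfl, _⟩ | ⟨hbC, _, hbn⟩
      · omega
      rcases hmemf hC ha with ⟨rfl, _⟩ | ⟨haC, _⟩
      · omega
      rcases hmemf hD hc with ⟨rfl, _⟩ | ⟨hcD, _⟩
      · omega
      by_cases hbn' : b = n
      · exact (Finset.disjoint_left.mp (hp.2.1 C hC D hD hCD)) (hbn' ▸ hbC) hnD
      · exact ncross hcr hC hD hCD haC hbC hcD hnD h1 h2 (by omega)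
    · -- d ∈ D, d ≤ n
      rcases hmemf hC hb with ⟨rfl, _⟩ | ⟨hbC, _, hbn⟩
      · have := (bd hp hD hdD).2; omega
      rcases hmemf hC ha with ⟨rfl, _⟩ | ⟨haC, _⟩
      · omega
      rcases hmemf hD hc with ⟨rfl, _⟩ | ⟨hcD, _⟩
      · omega
      exact ncross hcr hC hD hCD haC hbC hcD hdD h1 h2 h3

end NCAux
namespace NCAux

variable {n : ℕ} {π : Finset (Finset ℕ)}

lemma L5 (h : IsNCPartition n π) {i : ℕ} (hi : {i} ∈ π) (hsn : {n} ∈ π) (hin : i ≠ n)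
    (hm : IsNCPartition n (mergeSingles π i n)) :
    IsNCPartition (n+2) (insert {i, n+2} ((π.erase {i}).image (fblk n))) := by
  obtain ⟨hp, hcr⟩ := h
  have hibd := bd hp hi (Finset.mem_singleton_self i)
  have hilt : i < n := lt_of_le_of_ne hibd.2 hin
  -- any block containing n is {n}
  have hblkn : ∀ {C : Finset ℕ}, C ∈ π → n ∈ C → C = {n} := fun hC hnC =>
    block_eq hp hC hsn hnC (Finset.mem_singleton_self n)
  have hmemf : ∀ {B : Finset ℕ}, B ∈ π → ∀ {x : ℕ}, x ∈ fblk n B →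
      (x = n + 1 ∧ n ∈ B) ∨ (x ∈ B ∧ 1 ≤ x ∧ x ≤ n) := by
    intro B hB x hx
    unfold fblk at hx
    split at hx
    · rcases Finset.mem_insert.mp hx with rfl | h
      · rename_i hnb; exact Or.inl ⟨rfl, hnb⟩
      · exact Or.inr ⟨h, bd hp hB h⟩
    · exact Or.inr ⟨hx, bd hp hB hx⟩
  -- blocks other than {i},{n} belong to the merge
  have hmergemem : ∀ {B : Finset ℕ}, B ∈ π → B ≠ {i} → B ≠ {n} → B ∈ mergeSingles π i n :=
    fun hB h1 h2 => Finset.mem_insert_of_mem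
      (Finset.mem_erase.mpr ⟨h2, Finset.mem_erase.mpr ⟨h1, hB⟩⟩)
  have hinmem : ({i, n} : Finset ℕ) ∈ mergeSingles π i n := Finset.mem_insert_self _ _
  constructor
  · refine ⟨?_, ?_, ?_⟩
    · intro A hA
      rcases Finset.mem_insert.mp hA with rfl | hA
      · exact ⟨i, by simp⟩
      · obtain ⟨B, hB, rfl⟩ := Finset.mem_image.mp hA
        obtain ⟨y, hy⟩ := hp.1 B (Finset.mem_of_mem_erase hB)
        exact ⟨y, mem_fblk_of_mem hy⟩
    · intro A hA B hB hAB
      rw [Finset.disjoint_left]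
      intro x hxA hxB
      rcases Finset.mem_insert.mp hA with rfl | hA <;>
        rcases Finset.mem_insert.mp hB with rfl | hB
      · exact hAB rfl
      · obtain ⟨C, hC', rfl⟩ := Finset.mem_image.mp hB
        have hCi : C ≠ {i} := (Finset.mem_erase.mp hC').1
        have hC : C ∈ π := Finset.mem_of_mem_erase hC'
        simp only [Finset.mem_insert, Finset.mem_singleton] at hxA
        rcases hmemf hC hxB with ⟨h1, _⟩ | ⟨hxC, _, h2⟩
        · omega
        · rcases hxA with rfl | rfl
          · exact hCi (block_eq hp hC hi hxC (Finset.mem_singleton_self _))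
          · omega
      · obtain ⟨C, hC', rfl⟩ := Finset.mem_image.mp hA
        have hCi : C ≠ {i} := (Finset.mem_erase.mp hC').1
        have hC : C ∈ π := Finset.mem_of_mem_erase hC'
        simp only [Finset.mem_insert, Finset.mem_singleton] at hxB
        rcases hmemf hC hxA with ⟨h1, _⟩ | ⟨hxC, _, h2⟩
        · omega
        · rcases hxB with rfl | rfl
          · exact hCi (block_eq hp hC hi hxC (Finset.mem_singleton_self _))
          · omega
      · obtain ⟨C, hC', rfl⟩ := Finset.mem_image.mp hA
        obtain ⟨D, hD', rfl⟩ := Finset.mem_image.mp hB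
        have hC : C ∈ π := Finset.mem_of_mem_erase hC'
        have hD : D ∈ π := Finset.mem_of_mem_erase hD'
        have hCD : C ≠ D := fun he => hAB (by rw [he])
        have hdisj := Finset.disjoint_left.mp (hp.2.1 C hC D hD hCD)
        rcases hmemf hC hxA with ⟨rfl, hnC⟩ | ⟨hxC, _⟩
        · rcases hmemf hD hxB with ⟨_, hnD⟩ | ⟨hxD, _, hle⟩
          · exact hdisj hnC hnD
          · omega
        · rcases hmemf hD hxB with ⟨rfl, hnD⟩ | ⟨hxD, _⟩
          · have := (bd hp hC hxC).2; omega
          · exact hdisj hxC hxD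
    · intro x
      constructor
      · intro hx
        rw [Finset.mem_Icc] at hx
        by_cases hxi : x = i
        · exact ⟨{i, n+2}, Finset.mem_insert_self _ _, by simp [hxi]⟩
        by_cases hx2 : x = n + 2
        · refine ⟨{i, n+2}, Finset.mem_insert_self _ _, ?_⟩
          simp only [Finset.mem_insert, Finset.mem_singleton]; omega
        by_cases hx1 : x = n + 1
        · have hni : ({n} : Finset ℕ) ≠ {i} := fun he => hin.symm (Finset.singleton_inj.mp he)
          refine ⟨fblk n {n}, Finset.mem_insert_of_mem
            (Finset.mem_image_of_mem _ (Finset.mem_erase.mpr ⟨hni, hsn⟩)), ?_⟩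
          unfold fblk
          rw [if_pos (Finset.mem_singleton_self n)]
          simp [hx1]
        · have hxn : x ≤ n := by omega
          obtain ⟨A, hA, hxA⟩ := (hp.2.2 x).mp (Finset.mem_Icc.mpr ⟨hx.1, hxn⟩)
          have hAi : A ≠ {i} := fun he => hxi (by simpa [he] using hxA)
          exact ⟨fblk n A, Finset.mem_insert_of_mem
            (Finset.mem_image_of_mem _ (Finset.mem_erase.mpr ⟨hAi, hA⟩)),
            mem_fblk_of_mem hxA⟩
      · rintro ⟨A, hA, hxA⟩
        rw [Finset.mem_Icc]
        rcases Finset.mem_insert.mp hA with rfl | hA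
        · simp only [Finset.mem_insert, Finset.mem_singleton] at hxA; omega
        · obtain ⟨C, hC', rfl⟩ := Finset.mem_image.mp hA
          have hC : C ∈ π := Finset.mem_of_mem_erase hC'
          rcases hmemf hC hxA with ⟨h1, _⟩ | ⟨_, h2⟩ <;> omega
  · rintro ⟨A, hA, B, hB, hAB, a, ha, b, hb, c, hc, d, hd, h1, h2, h3⟩
    rcases Finset.mem_insert.mp hA with rfl | hA
    · -- A = {i,n+2}: a = i, b = n+2, d > n+2 impossible
      rcases Finset.mem_insert.mp hB with rfl | hB
      · exact hAB rfl
      obtain ⟨C, hC', rfl⟩ := Finset.mem_image.mp hB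
      have hC : C ∈ π := Finset.mem_of_mem_erase hC'
      simp only [Finset.mem_insert, Finset.mem_singleton] at ha hb
      rcases hmemf hC hd with ⟨h4, _⟩ | ⟨_, _, h4⟩ <;> omega
    rcases Finset.mem_insert.mp hB with rfl | hB
    · -- B = {i,n+2}: c = i, d = n+2, so a < i < b, a,b ∈ fblk C
      obtain ⟨C, hC', rfl⟩ := Finset.mem_image.mp hA
      have hC : C ∈ π := Finset.mem_of_mem_erase hC'
      have hCi : C ≠ {i} := (Finset.mem_erase.mp hC').1
      simp only [Finset.mem_insert, Finset.mem_singleton] at hc hd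
      rcases hmemf hC ha with ⟨rfl, _⟩ | ⟨haC, _, han⟩
      · rcases hmemf hC hb with ⟨h4, _⟩ | ⟨_, _, h4⟩ <;> omega
      rcases hmemf hC hb with ⟨rfl, hnC⟩ | ⟨hbC, _, hbn⟩
      · -- b = n+1, n ∈ C ⇒ C = {n}; a ∈ C = {n}, a < c ≤ n+2...
        have := hblkn hC hnC
        subst this
        simp only [Finset.mem_singleton] at haC
        omega
      · -- a, b ∈ C, a < i < b ≤ n; c = i (since c < b ≤ n), d = n+2
        have hci : c = i := by omega
        subst hci
        have hbn' : b ≠ n := fun he => by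
          have := hblkn hC (he ▸ hbC)
          subst this
          simp only [Finset.mem_singleton] at haC
          omega
        have hCn : C ≠ {n} := fun he => by
          rw [he] at hbC
          simp only [Finset.mem_singleton] at hbC
          exact hbn' hbC
        have hCin : C ≠ ({c, n} : Finset ℕ) := fun he => by
          have : n ∈ C := by rw [he]; simp
          exact hCn (hblkn hC this)
        exact ncross hm.2 (hmergemem hC hCi hCn) hinmem hCin haC hbC
          (show c ∈ ({c,n} : Finset ℕ) by simp) (show n ∈ ({c,n} : Finset ℕ) by simp)
          h1 h2 (by omega)
    · -- both images
      obtain ⟨C, hC', rfl⟩ := Finset.mem_image.mp hA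
      obtain ⟨D, hD', rfl⟩ := Finset.mem_image.mp hB
      have hC : C ∈ π := Finset.mem_of_mem_erase hC'
      have hD : D ∈ π := Finset.mem_of_mem_erase hD'
      have hCD : C ≠ D := fun he => hAB (by rw [he])
      rcases hmemf hD hd with ⟨rfl, hnD⟩ | ⟨hdD, _⟩
      · -- d = n+1, D = {n}; c ∈ fblk {n}, c < n+1 so c = n, but c < b < n+1
        have := hblkn hD hnD
        subst this
        rcases hmemf hD hc with ⟨h4, _⟩ | ⟨hcD, _⟩
        · omega
        · simp only [Finset.mem_singleton] at hcD
          omega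
      · rcases hmemf hC hb with ⟨rfl, _⟩ | ⟨hbC, _, hbn⟩
        · have := (bd hp hD hdD).2; omega
        rcases hmemf hC ha with ⟨rfl, _⟩ | ⟨haC, _⟩
        · omega
        rcases hmemf hD hc with ⟨rfl, _⟩ | ⟨hcD, _⟩
        · omega
        exact ncross hcr hC hD hCD haC hbC hcD hdD h1 h2 h3

end NCAux
namespace NCAux

variable {n : ℕ} {π : Finset (Finset ℕ)}

lemma marr0 (h : IsNCPartition n π) : IsMarriageable (n+2) (f0map n π) := by
  have hp := h.1
  have h1 : ({n+1} : Finset ℕ) ∉ π := not_mem_self hp (by omega)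
  have h2 : ({n+2} : Finset ℕ) ∉ π := not_mem_self hp (by omega)
  refine ⟨L_hi11 h, n+1, n+2, by omega, Finset.mem_insert_self _ _,
    Finset.mem_insert_of_mem (Finset.mem_insert_self _ _), ?_⟩
  have hne : ({n+1} : Finset ℕ) ∉ insert {n+2} π := by
    intro hmem
    rcases Finset.mem_insert.mp hmem with he | hmm
    · have := Finset.singleton_inj.mp he; omega
    · exact h1 hmm
  have heq : mergeSingles (f0map n π) (n+1) (n+2) = f1map n π := by
    unfold mergeSingles f0map f1map
    rw [Finset.erase_insert hne, Finset.erase_insert h2]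
  rw [heq]
  exact L_hi2 h

lemma merge_insert {i j : ℕ} (X : Finset ℕ) (hXi : X ≠ {i}) (hXj : X ≠ {j}) :
    mergeSingles (insert X π) i j = insert X (mergeSingles π i j) := by
  unfold mergeSingles
  rw [Finset.erase_insert_of_ne hXi, Finset.erase_insert_of_ne hXj, Finset.insert_comm]

lemma marr1 (h : IsMarriageable n π) : IsMarriageable (n+2) (f1map n π) := by
  obtain ⟨hNC, i, j, hij, hiπ, hjπ, hm⟩ := h
  have hp := hNC.1
  have hibd := bd hp hiπ (Finset.mem_singleton_self i)
  have hjbd := bd hp hjπ (Finset.mem_singleton_self j)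
  have key : ∀ k : ℕ, k ≤ n → ({n+1, n+2} : Finset ℕ) ≠ {k} := by
    intro k hk he
    have : n+2 ∈ ({k} : Finset ℕ) := by rw [← he]; simp
    simp only [Finset.mem_singleton] at this
    omega
  refine ⟨L_hi2 hNC, i, j, hij, Finset.mem_insert_of_mem hiπ,
    Finset.mem_insert_of_mem hjπ, ?_⟩
  have heq : mergeSingles (f1map n π) i j = f1map n (mergeSingles π i j) := by
    unfold f1map
    rw [merge_insert _ (key i hibd.2) (key j hjbd.2)]
  rw [heq]
  exact L_hi2 hm

lemma shiftB_inj : Function.Injective shiftB := by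
  intro s t h
  ext x
  constructor <;> intro hx
  · have hmem : x + 1 ∈ shiftB t := h ▸ mem_shiftB.mpr ⟨x, hx, rfl⟩
    obtain ⟨y, hy, hxy⟩ := mem_shiftB.mp hmem
    have : y = x := by omega
    exact this ▸ hy
  · have hmem : x + 1 ∈ shiftB s := h.symm ▸ mem_shiftB.mpr ⟨x, hx, rfl⟩
    obtain ⟨y, hy, hxy⟩ := mem_shiftB.mp hmem
    have : y = x := by omega
    exact this ▸ hy

lemma shiftB_singleton (k : ℕ) : shiftB {k} = {k+1} := by
  unfold shiftB; simp

lemma shiftB_pair (k l : ℕ) : shiftB {k, l} = {k+1, l+1} := by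
  unfold shiftB; simp

lemma marr2 (h : IsMarriageable n π) : IsMarriageable (n+2) (f2map n π) := by
  obtain ⟨hNC, i, j, hij, hiπ, hjπ, hm⟩ := h
  have hp := hNC.1
  have key : ∀ k : ℕ, ({1, n+2} : Finset ℕ) ≠ {k+1} := by
    intro k he
    have h1 : (1:ℕ) ∈ ({k+1} : Finset ℕ) := by rw [← he]; simp
    have h2 : n+2 ∈ ({k+1} : Finset ℕ) := by rw [← he]; simp
    simp only [Finset.mem_singleton] at h1 h2
    omega
  have him : ∀ (σ : Finset (Finset ℕ)) (k : ℕ), {k} ∈ π →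
      (σ.image shiftB).erase {k+1} = (σ.erase {k}).image shiftB := by
    intro σ k _
    rw [← shiftB_singleton k]
    exact (erase_image shiftB σ {k} (fun B _ he => shiftB_inj he)).symm
  refine ⟨L_shift hNC, i+1, j+1, by omega, ?_, ?_, ?_⟩
  · exact Finset.mem_insert_of_mem (shiftB_singleton i ▸ Finset.mem_image_of_mem _ hiπ)
  · exact Finset.mem_insert_of_mem (shiftB_singleton j ▸ Finset.mem_image_of_mem _ hjπ)
  · have heq : mergeSingles (f2map n π) (i+1) (j+1) = f2map n (mergeSingles π i j) := by
      unfold mergeSingles f2map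
      rw [Finset.erase_insert_of_ne (key i), Finset.erase_insert_of_ne (key j)]
      rw [him π i hiπ]
      rw [him (π.erase {i}) j hjπ]
      rw [Finset.image_insert, shiftB_pair]
      rw [Finset.insert_comm]
    rw [heq]
    exact L_shift hm

lemma fblk_singleton {k : ℕ} (hk : k ≠ n) : fblk n {k} = {k} := by
  unfold fblk
  rw [if_neg (by simp only [Finset.mem_singleton]; omega)]

lemma marr3 (h : IsMarriageable n π) : IsMarriageable (n+2) (f3map n π) := by
  obtain ⟨hNC, i, j, hij, hiπ, hjπ, hm⟩ := h
  have hp := hNC.1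
  have hibd := bd hp hiπ (Finset.mem_singleton_self i)
  have hjbd := bd hp hjπ (Finset.mem_singleton_self j)
  have hn : 0 < n := by omega
  have hns : ({n+2} : Finset ℕ) ∉ π.image (fblk n) := by
    intro hmem
    obtain ⟨B, hB, hBe⟩ := Finset.mem_image.mp hmem
    have hx : n+2 ∈ fblk n B := by rw [hBe]; simp
    rcases mem_fblk hx with h1 | h1
    · omega
    · have := (bd hp hB h1).2; omega
  have hsingmem : ∀ {k : ℕ}, {k} ∈ π → k ≠ n → ({k} : Finset ℕ) ∈ f3map n π := by
    intro k hk hkn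
    exact Finset.mem_insert_of_mem (fblk_singleton hkn ▸ Finset.mem_image_of_mem _ hk)
  have him : ∀ (σ : Finset (Finset ℕ)) (k : ℕ), (∀ B ∈ σ, B ∈ π) → {k} ∈ π → k ≠ n →
      (σ.image (fblk n)).erase {k} = (σ.erase {k}).image (fblk n) := by
    intro σ k hσ hk hkn
    conv_lhs => rw [← fblk_singleton hkn]
    exact (erase_image (fblk n) σ {k}
      (fun B hB he => fblk_inj_on hp (hσ B hB) hk he)).symm
  refine ⟨L_fY hn hNC, ?_⟩
  -- the case where the merged pair includes n
  have main : ∀ k : ℕ, k ≠ n → {k} ∈ π → {n} ∈ π →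
      IsNCPartition n (mergeSingles π k n) →
      IsNCPartition (n+2) (mergeSingles (f3map n π) k (n+2)) := by
    intro k hkn hkπ hnπ hmm
    have heq : mergeSingles (f3map n π) k (n+2)
        = insert {k, n+2} ((π.erase {k}).image (fblk n)) := by
      unfold mergeSingles f3map
      rw [Finset.erase_insert_of_ne (by
        intro he
        have := Finset.singleton_inj.mp he
        have := (bd hp hkπ (Finset.mem_singleton_self k)).2
        omega)]
      rw [him π k (fun B hB => hB) hkπ hkn]
      rw [Finset.erase_insert (fun hc => by
        obtain ⟨B, hB, hBe⟩ := Finset.mem_image.mp hc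
        exact hns (Finset.mem_image.mpr ⟨B, Finset.mem_of_mem_erase hB, hBe⟩))]
    rw [heq]
    exact L5 hNC hkπ hnπ hkn hmm
  by_cases hin : i = n
  · have hjn : j ≠ n := fun hh => hij (by rw [hin, hh])
    have hnπ : {n} ∈ π := hin ▸ hiπ
    rw [mergeSingles_comm, hin] at hm
    refine ⟨j, n+2, by omega, hsingmem hjπ hjn, Finset.mem_insert_self _ _, ?_⟩
    exact main j hjn hjπ hnπ hm
  by_cases hjn : j = n
  · have hnπ : {n} ∈ π := hjn ▸ hjπ
    rw [hjn] at hm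
    refine ⟨i, n+2, by omega, hsingmem hiπ hin, Finset.mem_insert_self _ _, ?_⟩
    exact main i hin hiπ hnπ hm
  · refine ⟨i, j, hij, hsingmem hiπ hin, hsingmem hjπ hjn, ?_⟩
    have heq : mergeSingles (f3map n π) i j = f3map n (mergeSingles π i j) := by
      unfold mergeSingles f3map
      rw [Finset.erase_insert_of_ne (by
        intro he; have := Finset.singleton_inj.mp he; omega)]
      rw [Finset.erase_insert_of_ne (by
        intro he; have := Finset.singleton_inj.mp he; omega)]
      rw [him π i (fun B hB => hB) hiπ hin]
      rw [him (π.erase {i}) j (fun B hB => Finset.mem_of_mem_erase hB) hjπ hjn]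
      rw [Finset.image_insert]
      rw [show fblk n {i, j} = {i, j} from by
        unfold fblk
        rw [if_neg (by simp only [Finset.mem_insert, Finset.mem_singleton]; omega)]]
      rw [Finset.insert_comm]
    rw [heq]
    exact L_fY hn hm

end NCAux
namespace NCAux

variable {n : ℕ}

lemma fblk_inj' {B C : Finset ℕ} (hB1 : n + 1 ∉ B) (hC1 : n + 1 ∉ C)
    (he : fblk n B = fblk n C) : B = C := by
  unfold fblk at he
  split at he <;> split at he
  · ext x
    constructor
    · intro hx
      have : x ∈ insert (n+1) C := he ▸ Finset.mem_insert_of_mem hx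
      rcases Finset.mem_insert.mp this with rfl | h
      · exact absurd hx hB1
      · exact h
    · intro hx
      have : x ∈ insert (n+1) B := he ▸ Finset.mem_insert_of_mem hx
      rcases Finset.mem_insert.mp this with rfl | h
      · exact absurd hx hC1
      · exact h
  · exact absurd (he ▸ Finset.mem_insert_self (n+1) B) hC1
  · exfalso
    refine hB1 ?_
    rw [he]
    exact Finset.mem_insert_self (n+1) C
  · exact he

lemma image_shiftB_cancel {s t : Finset (Finset ℕ)}
    (h : s.image shiftB = t.image shiftB) : s = t := by
  ext B
  constructor <;> intro hB
  · have hmem : shiftB B ∈ t.image shiftB := h ▸ Finset.mem_image_of_mem _ hB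
    obtain ⟨C, hC, he⟩ := Finset.mem_image.mp hmem
    exact (shiftB_inj he) ▸ hC
  · have hmem : shiftB B ∈ s.image shiftB := h.symm ▸ Finset.mem_image_of_mem _ hB
    obtain ⟨C, hC, he⟩ := Finset.mem_image.mp hmem
    exact (shiftB_inj he) ▸ hC

lemma finite_NC (n : ℕ) : {π : Finset (Finset ℕ) | IsNCPartition n π}.Finite := by
  apply Set.Finite.subset (Finset.finite_toSet ((Finset.Icc 1 n).powerset.powerset))
  intro π hπ
  simp only [Set.mem_setOf_eq] at hπ
  rw [Finset.mem_coe, Finset.mem_powerset]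
  intro B hB
  rw [Finset.mem_powerset]
  intro x hx
  exact (hπ.1.2.2 x).mpr ⟨B, hB, hx⟩

lemma hns' {π : Finset (Finset ℕ)} (hp : IsPartitionOf n π) :
    ({n+2} : Finset ℕ) ∉ π.image (fblk n) := by
  intro hmem
  obtain ⟨B, hB, hBe⟩ := Finset.mem_image.mp hmem
  have hx : n+2 ∈ fblk n B := by rw [hBe]; simp
  rcases mem_fblk hx with h1 | h1
  · omega
  · have := (bd hp hB h1).2; omega

lemma key0 {π : Finset (Finset ℕ)} (hp : IsPartitionOf n π) :
    ((f0map n π).erase {n+1}).erase {n+2} = π := by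
  have h1 : ({n+1} : Finset ℕ) ∉ π := not_mem_self hp (by omega)
  have h2 : ({n+2} : Finset ℕ) ∉ π := not_mem_self hp (by omega)
  have hne : ({n+1} : Finset ℕ) ∉ insert {n+2} π := by
    intro hmem
    rcases Finset.mem_insert.mp hmem with he | hmm
    · have := Finset.singleton_inj.mp he; omega
    · exact h1 hmm
  unfold f0map
  rw [Finset.erase_insert hne, Finset.erase_insert h2]

lemma key1 {π : Finset (Finset ℕ)} (hp : IsPartitionOf n π) :
    (f1map n π).erase {n+1, n+2} = π := by
  have h1 : ({n+1, n+2} : Finset ℕ) ∉ π := by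
    intro hmem
    have := (bd hp hmem (Finset.mem_insert_self _ _)).2
    omega
  unfold f1map
  rw [Finset.erase_insert h1]

lemma key2 {π : Finset (Finset ℕ)} (hp : IsPartitionOf n π) :
    (f2map n π).erase {1, n+2} = π.image shiftB := by
  have h1 : ({1, n+2} : Finset ℕ) ∉ π.image shiftB := by
    intro hmem
    obtain ⟨B, hB, hBe⟩ := Finset.mem_image.mp hmem
    have hx : (1:ℕ) ∈ shiftB B := by rw [hBe]; simp
    obtain ⟨y, hyB, hy⟩ := mem_shiftB.mp hx
    have := (bd hp hB hyB).1
    omega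
  unfold f2map
  rw [Finset.erase_insert h1]

lemma key3 {π : Finset (Finset ℕ)} (hp : IsPartitionOf n π) :
    (f3map n π).erase {n+2} = π.image (fblk n) := by
  unfold f3map
  rw [Finset.erase_insert (hns' hp)]

lemma inj0 : Set.InjOn (f0map n) {π | IsNCPartition n π} := by
  intro π hπ π' hπ' he
  simp only [Set.mem_setOf_eq] at hπ hπ'
  rw [← key0 hπ.1, ← key0 hπ'.1, he]

lemma inj1 : Set.InjOn (f1map n) {π | IsMarriageable n π} := by
  intro π hπ π' hπ' he
  simp only [Set.mem_setOf_eq] at hπ hπ'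
  rw [← key1 hπ.1.1, ← key1 hπ'.1.1, he]

lemma inj2 : Set.InjOn (f2map n) {π | IsMarriageable n π} := by
  intro π hπ π' hπ' he
  simp only [Set.mem_setOf_eq] at hπ hπ'
  apply image_shiftB_cancel
  rw [← key2 hπ.1.1, ← key2 hπ'.1.1, he]

lemma inj3 : Set.InjOn (f3map n) {π | IsMarriageable n π} := by
  intro π hπ π' hπ' he
  simp only [Set.mem_setOf_eq] at hπ hπ'
  have h2 : π.image (fblk n) = π'.image (fblk n) := by
    rw [← key3 hπ.1.1, ← key3 hπ'.1.1, he]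
  ext B
  constructor <;> intro hB
  · have hmem : fblk n B ∈ π'.image (fblk n) := h2 ▸ Finset.mem_image_of_mem _ hB
    obtain ⟨C, hC, hfe⟩ := Finset.mem_image.mp hmem
    have hB1 : n + 1 ∉ B := fun hc => by have := (bd hπ.1.1 hB hc).2; omega
    have hC1 : n + 1 ∉ C := fun hc => by have := (bd hπ'.1.1 hC hc).2; omega
    exact (fblk_inj' hC1 hB1 hfe) ▸ hC
  · have hmem : fblk n B ∈ π.image (fblk n) := h2.symm ▸ Finset.mem_image_of_mem _ hB
    obtain ⟨C, hC, hfe⟩ := Finset.mem_image.mp hmem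
    have hB1 : n + 1 ∉ B := fun hc => by have := (bd hπ'.1.1 hB hc).2; omega
    have hC1 : n + 1 ∉ C := fun hc => by have := (bd hπ.1.1 hC hc).2; omega
    exact (fblk_inj' hC1 hB1 hfe) ▸ hC

lemma marr_two {π : Finset (Finset ℕ)} (h : IsMarriageable n π) : 2 ≤ n := by
  obtain ⟨hNC, i, j, hij, hiπ, hjπ, _⟩ := h
  have h1 := bd hNC.1 hiπ (Finset.mem_singleton_self i)
  have h2 := bd hNC.1 hjπ (Finset.mem_singleton_self j)
  omega

end NCAux

theorem stmt7 (n : ℕ) : Cnum n + 3 * Mnum n ≤ Mnum (n + 2) := by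
  classical
  open NCAux in
  let S : Set (Finset (Finset ℕ)) := {π | IsNCPartition n π}
  let T : Set (Finset (Finset ℕ)) := {π | IsMarriageable n π}
  let U : Set (Finset (Finset ℕ)) := {σ | IsMarriageable (n+2) σ}
  have hSfin : S.Finite := NCAux.finite_NC n
  have hTfin : T.Finite := hSfin.subset (fun π h => h.1)
  have hUfin : U.Finite := (NCAux.finite_NC (n+2)).subset (fun σ h => h.1)
  let F0 : Set (Finset (Finset ℕ)) := (NCAux.f0map n) '' S
  let F1 : Set (Finset (Finset ℕ)) := (NCAux.f1map n) '' T
  let F2 : Set (Finset (Finset ℕ)) := (NCAux.f2map n) '' T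
  let F3 : Set (Finset (Finset ℕ)) := (NCAux.f3map n) '' T
  -- images land in U
  have hsub : F0 ∪ (F1 ∪ (F2 ∪ F3)) ⊆ U := by
    rintro σ (⟨π, hπ, rfl⟩ | ⟨π, hπ, rfl⟩ | ⟨π, hπ, rfl⟩ | ⟨π, hπ, rfl⟩)
    · exact NCAux.marr0 hπ
    · exact NCAux.marr1 hπ
    · exact NCAux.marr2 hπ
    · exact NCAux.marr3 hπ
  -- invariants
  have hpart : ∀ σ ∈ F0 ∪ (F1 ∪ (F2 ∪ F3)), IsPartitionOf (n+2) σ :=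
    fun σ hσ => (hsub hσ).1.1
  -- pairwise "False" lemmas
  have d01 : ∀ σ, σ ∈ F0 → σ ∈ F1 → False := by
    rintro σ ⟨π, hπ, rfl⟩ hσ1
    have hp := (NCAux.marr0 hπ).1.1
    obtain ⟨π', hπ', he⟩ := hσ1
    have h1 : ({n+1} : Finset ℕ) ∈ NCAux.f0map n π := Finset.mem_insert_self _ _
    have h2 : ({n+1, n+2} : Finset ℕ) ∈ NCAux.f0map n π := by
      rw [← he]; exact Finset.mem_insert_self _ _
    have := NCAux.block_eq hp h1 h2 (Finset.mem_singleton_self (n+1))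
      (Finset.mem_insert_self _ _)
    have : n+2 ∈ ({n+1} : Finset ℕ) := by
      rw [this]; simp
    simp only [Finset.mem_singleton] at this
    omega
  have d02 : ∀ σ, σ ∈ F0 → σ ∈ F2 → False := by
    rintro σ ⟨π, hπ, rfl⟩ hσ2
    have hp := (NCAux.marr0 hπ).1.1
    obtain ⟨π', hπ', he⟩ := hσ2
    have h1 : ({n+2} : Finset ℕ) ∈ NCAux.f0map n π :=
      Finset.mem_insert_of_mem (Finset.mem_insert_self _ _)
    have h2 : ({1, n+2} : Finset ℕ) ∈ NCAux.f0map n π := by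
      rw [← he]; exact Finset.mem_insert_self _ _
    have heq := NCAux.block_eq hp h1 h2 (Finset.mem_singleton_self (n+2))
      (by simp : n+2 ∈ ({1, n+2} : Finset ℕ))
    have : (1:ℕ) ∈ ({n+2} : Finset ℕ) := by rw [heq]; simp
    simp only [Finset.mem_singleton] at this
    omega
  have d03 : ∀ σ, σ ∈ F0 → σ ∈ F3 → False := by
    rintro σ ⟨π, hπ, rfl⟩ hσ3
    have hp := (NCAux.marr0 hπ).1.1
    obtain ⟨π', hπ', he⟩ := hσ3
    have hp' := hπ'.1.1
    have hn2 : 2 ≤ n := NCAux.marr_two hπ'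
    obtain ⟨A, hA, hnA⟩ := (hp'.2.2 n).mp (Finset.mem_Icc.mpr (by omega))
    have hB : NCAux.fblk n A ∈ NCAux.f0map n π := by
      rw [← he]
      exact Finset.mem_insert_of_mem (Finset.mem_image_of_mem _ hA)
    have hmem1 : n+1 ∈ NCAux.fblk n A := by
      unfold NCAux.fblk
      rw [if_pos hnA]; simp
    have hmemn : n ∈ NCAux.fblk n A := NCAux.mem_fblk_of_mem hnA
    have h1 : ({n+1} : Finset ℕ) ∈ NCAux.f0map n π := Finset.mem_insert_self _ _
    have heq := NCAux.block_eq hp h1 hB (Finset.mem_singleton_self (n+1)) hmem1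
    have : n ∈ ({n+1} : Finset ℕ) := by rw [heq]; exact hmemn
    simp only [Finset.mem_singleton] at this
    omega
  have d12 : ∀ σ, σ ∈ F1 → σ ∈ F2 → False := by
    rintro σ ⟨π, hπ, rfl⟩ hσ2
    have hp := (NCAux.marr1 hπ).1.1
    have hn2 : 2 ≤ n := NCAux.marr_two hπ
    obtain ⟨π', hπ', he⟩ := hσ2
    have h1 : ({n+1, n+2} : Finset ℕ) ∈ NCAux.f1map n π := Finset.mem_insert_self _ _
    have h2 : ({1, n+2} : Finset ℕ) ∈ NCAux.f1map n π := by
      rw [← he]; exact Finset.mem_insert_self _ _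
    have heq := NCAux.block_eq hp h1 h2 (by simp : n+2 ∈ ({n+1, n+2} : Finset ℕ))
      (by simp : n+2 ∈ ({1, n+2} : Finset ℕ))
    have : (1:ℕ) ∈ ({n+1, n+2} : Finset ℕ) := by rw [heq]; simp
    simp only [Finset.mem_insert, Finset.mem_singleton] at this
    omega
  have d13 : ∀ σ, σ ∈ F1 → σ ∈ F3 → False := by
    rintro σ ⟨π, hπ, rfl⟩ hσ3
    have hp := (NCAux.marr1 hπ).1.1
    obtain ⟨π', hπ', he⟩ := hσ3
    have h1 : ({n+1, n+2} : Finset ℕ) ∈ NCAux.f1map n π := Finset.mem_insert_self _ _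
    have h2 : ({n+2} : Finset ℕ) ∈ NCAux.f1map n π := by
      rw [← he]; exact Finset.mem_insert_self _ _
    have heq := NCAux.block_eq hp h1 h2 (by simp : n+2 ∈ ({n+1, n+2} : Finset ℕ))
      (Finset.mem_singleton_self (n+2))
    have : n+1 ∈ ({n+2} : Finset ℕ) := by rw [← heq]; simp
    simp only [Finset.mem_singleton] at this
    omega
  have d23 : ∀ σ, σ ∈ F2 → σ ∈ F3 → False := by
    rintro σ ⟨π, hπ, rfl⟩ hσ3
    have hp := (NCAux.marr2 hπ).1.1
    obtain ⟨π', hπ', he⟩ := hσ3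
    have h1 : ({1, n+2} : Finset ℕ) ∈ NCAux.f2map n π := Finset.mem_insert_self _ _
    have h2 : ({n+2} : Finset ℕ) ∈ NCAux.f2map n π := by
      rw [← he]; exact Finset.mem_insert_self _ _
    have heq := NCAux.block_eq hp h1 h2 (by simp : n+2 ∈ ({1, n+2} : Finset ℕ))
      (Finset.mem_singleton_self (n+2))
    have : (1:ℕ) ∈ ({n+2} : Finset ℕ) := by rw [← heq]; simp
    simp only [Finset.mem_singleton] at this
    omega
  -- cardinalities
  have e0 : F0.ncard = Cnum n := Set.ncard_image_of_injOn NCAux.inj0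
  have e1 : F1.ncard = Mnum n := Set.ncard_image_of_injOn NCAux.inj1
  have e2 : F2.ncard = Mnum n := Set.ncard_image_of_injOn NCAux.inj2
  have e3 : F3.ncard = Mnum n := Set.ncard_image_of_injOn NCAux.inj3
  have hF0 : F0.Finite := hSfin.image _
  have hF1 : F1.Finite := hTfin.image _
  have hF2 : F2.Finite := hTfin.image _
  have hF3 : F3.Finite := hTfin.image _
  have u23 : (F2 ∪ F3).ncard = F2.ncard + F3.ncard :=
    Set.ncard_union_eq (Set.disjoint_left.mpr (fun {σ} hσ hσ' => d23 σ hσ hσ')) hF2 hF3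
  have u123 : (F1 ∪ (F2 ∪ F3)).ncard = F1.ncard + (F2.ncard + F3.ncard) := by
    rw [Set.ncard_union_eq (Set.disjoint_union_right.mpr
      ⟨Set.disjoint_left.mpr (fun {σ} hσ hσ' => d12 σ hσ hσ'),
       Set.disjoint_left.mpr (fun {σ} hσ hσ' => d13 σ hσ hσ')⟩) hF1 (hF2.union hF3), u23]
  have u0123 : (F0 ∪ (F1 ∪ (F2 ∪ F3))).ncard
      = F0.ncard + (F1.ncard + (F2.ncard + F3.ncard)) := by
    rw [Set.ncard_union_eq (Set.disjoint_union_right.mpr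
      ⟨Set.disjoint_left.mpr (fun {σ} hσ hσ' => d01 σ hσ hσ'),
       Set.disjoint_union_right.mpr
        ⟨Set.disjoint_left.mpr (fun {σ} hσ hσ' => d02 σ hσ hσ'),
         Set.disjoint_left.mpr (fun {σ} hσ hσ' => d03 σ hσ hσ')⟩⟩)
      hF0 ((hF1.union (hF2.union hF3))), u123]
  have hle : (F0 ∪ (F1 ∪ (F2 ∪ F3))).ncard ≤ U.ncard :=
    Set.ncard_le_ncard hsub hUfin
  have : Cnum n + 3 * Mnum n = F0.ncard + (F1.ncard + (F2.ncard + F3.ncard)) := by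
    rw [e0, e1, e2, e3]; ring
  rw [this, ← u0123]
  exact hle
end

section
/- For n ≥ 1 and m ≥ 1 with (n,m) ≠ (1,1), the set of noncrossing partitions of [n] into m blocks with exactly one singleton block is in bijection with the set of pairs (π, i) where π is a noncrossing partition of [n−1] into m−1 blocks with no singleton block and 1 ≤ i ≤ n; hence NC_{n,m,1} = n · NC_{n−1,m−1,0}. -/
namespace NC13

/-- insert a gap at `i` -/
def um (i x : ℕ) : ℕ := if i ≤ x then x + 1 else x
/-- delete `i` -/
def dm (i x : ℕ) : ℕ := if i < x then x - 1 else x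

lemma um_ne (i x : ℕ) : um i x ≠ i := by unfold um; split <;> omega
lemma dm_um (i x : ℕ) : dm i (um i x) = x := by unfold um dm; split <;> split <;> omega
lemma um_dm {i x : ℕ} (h : x ≠ i) : um i (dm i x) = x := by unfold um dm; split <;> split <;> omega
lemma um_strictMono (i : ℕ) : StrictMono (um i) := by
  intro x y h; unfold um; split <;> split <;> omega
lemma um_inj (i : ℕ) : Function.Injective (um i) := (um_strictMono i).injective
lemma dm_lt {i x y : ℕ} (hx : x ≠ i) (hy : y ≠ i) (h : x < y) : dm i x < dm i y := by
  unfold dm; split <;> split <;> omega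
lemma um_mem {n i x : ℕ} (hi1 : 1 ≤ i) (hin : i ≤ n)
    (hx : x ∈ Finset.Icc 1 (n - 1)) : um i x ∈ Finset.Icc 1 n := by
  simp only [Finset.mem_Icc] at *; unfold um; split <;> omega
lemma dm_mem {n i x : ℕ} (hi1 : 1 ≤ i) (hin : i ≤ n) (hxi : x ≠ i)
    (hx : x ∈ Finset.Icc 1 n) : dm i x ∈ Finset.Icc 1 (n - 1) := by
  simp only [Finset.mem_Icc] at *; unfold dm; split <;> omega

def ub (i : ℕ) (A : Finset ℕ) : Finset ℕ := A.image (um i)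
def db (i : ℕ) (A : Finset ℕ) : Finset ℕ := A.image (dm i)

lemma mem_ub {i : ℕ} {A : Finset ℕ} {x : ℕ} : x ∈ ub i A ↔ ∃ a ∈ A, um i a = x :=
  Finset.mem_image
lemma mem_db {i : ℕ} {A : Finset ℕ} {x : ℕ} : x ∈ db i A ↔ ∃ a ∈ A, dm i a = x :=
  Finset.mem_image

lemma card_ub (i : ℕ) (A : Finset ℕ) : (ub i A).card = A.card :=
  Finset.card_image_of_injective A (um_inj i)

lemma i_notMem_ub (i : ℕ) (A : Finset ℕ) : i ∉ ub i A := by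
  intro h; obtain ⟨a, _, ha⟩ := mem_ub.1 h; exact um_ne i a ha

lemma ub_db {i : ℕ} {A : Finset ℕ} (h : i ∉ A) : ub i (db i A) = A := by
  unfold ub db
  rw [Finset.image_image]
  have key : ∀ a ∈ A, (um i ∘ dm i) a = a := by
    intro a ha
    have hai : a ≠ i := by rintro rfl; exact h ha
    exact um_dm hai
  calc A.image (um i ∘ dm i) = A.image id := Finset.image_congr (fun a ha => key a ha)
    _ = A := Finset.image_id
lemma db_ub (i : ℕ) (A : Finset ℕ) : db i (ub i A) = A := by
  unfold ub db
  rw [Finset.image_image]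
  exact (Finset.image_congr (fun a _ => dm_um i a)).trans Finset.image_id

lemma card_db {i : ℕ} {A : Finset ℕ} (h : i ∉ A) : (db i A).card = A.card := by
  conv_rhs => rw [← ub_db h]
  rw [card_ub]

/-- add singleton {i} and shift -/
def U (i : ℕ) (π : Finset (Finset ℕ)) : Finset (Finset ℕ) := insert {i} (π.image (ub i))
/-- remove singleton {i} and shift -/
def D (i : ℕ) (π : Finset (Finset ℕ)) : Finset (Finset ℕ) := (π.erase {i}).image (db i)

end NC13
namespace NC13

lemma singleton_notMem_image (i : ℕ) {π : Finset (Finset ℕ)}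
    (hne : ∀ A ∈ π, A.Nonempty) : ({i} : Finset ℕ) ∉ π.image (ub i) := by
  intro h
  obtain ⟨A, hA, hAe⟩ := Finset.mem_image.1 h
  obtain ⟨a, ha⟩ := hne A hA
  have : um i a ∈ ub i A := mem_ub.2 ⟨a, ha, rfl⟩
  rw [hAe, Finset.mem_singleton] at this
  exact um_ne i a this

lemma U_card {i : ℕ} {π : Finset (Finset ℕ)} (hne : ∀ A ∈ π, A.Nonempty) :
    (U i π).card = π.card + 1 := by
  unfold U
  rw [Finset.card_insert_of_notMem (singleton_notMem_image i hne),
    Finset.card_image_of_injective _ (Function.LeftInverse.injective (db_ub i))]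

lemma U_filter {i : ℕ} {π : Finset (Finset ℕ)} (hne : ∀ A ∈ π, A.Nonempty)
    (hs : (π.filter fun A => A.card = 1).card = 0) :
    ((U i π).filter fun A => A.card = 1) = {({i} : Finset ℕ)} := by
  unfold U
  rw [Finset.filter_insert]
  simp only [Finset.card_singleton, if_pos rfl]
  have : ((π.image (ub i)).filter fun A => A.card = 1) = ∅ := by
    rw [Finset.filter_eq_empty_iff]
    intro B hB
    obtain ⟨A, hA, rfl⟩ := Finset.mem_image.1 hB
    rw [card_ub]
    rw [Finset.card_eq_zero, Finset.filter_eq_empty_iff] at hs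
    exact hs hA
  rw [this]
  simp

lemma U_partition {n i : ℕ} (hn : 1 ≤ n) (hi : i ∈ Finset.Icc 1 n)
    {π : Finset (Finset ℕ)} (hπ : IsPartitionOf (n - 1) π) :
    IsPartitionOf n (U i π) := by
  obtain ⟨hne, hdisj, hun⟩ := hπ
  rw [Finset.mem_Icc] at hi
  refine ⟨?_, ?_, ?_⟩
  · intro A hA
    rcases Finset.mem_insert.1 hA with rfl | hA
    · exact ⟨i, Finset.mem_singleton_self i⟩
    · obtain ⟨B, hB, rfl⟩ := Finset.mem_image.1 hA
      obtain ⟨b, hb⟩ := hne B hB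
      exact ⟨um i b, mem_ub.2 ⟨b, hb, rfl⟩⟩
  · intro A hA B hB hAB
    rw [Finset.disjoint_left]
    intro x hxA hxB
    rcases Finset.mem_insert.1 hA with rfl | hA
    · rw [Finset.mem_singleton] at hxA
      rcases Finset.mem_insert.1 hB with rfl | hB
      · exact hAB rfl
      · obtain ⟨B', _, rfl⟩ := Finset.mem_image.1 hB
        exact i_notMem_ub i B' (hxA ▸ hxB)
    · obtain ⟨A', hA', rfl⟩ := Finset.mem_image.1 hA
      rcases Finset.mem_insert.1 hB with rfl | hB
      · rw [Finset.mem_singleton] at hxB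
        exact i_notMem_ub i A' (hxB ▸ hxA)
      · obtain ⟨B', hB', rfl⟩ := Finset.mem_image.1 hB
        obtain ⟨a, ha, rfl⟩ := mem_ub.1 hxA
        obtain ⟨b, hb, hba⟩ := mem_ub.1 hxB
        have hab : b = a := um_inj i hba
        subst hab
        have hne' : A' ≠ B' := fun e => hAB (e ▸ rfl)
        exact Finset.disjoint_left.1 (hdisj A' hA' B' hB' hne') ha hb
  · intro x
    constructor
    · intro hx
      by_cases hxi : x = i
      · exact ⟨{i}, Finset.mem_insert_self _ _, by simp [hxi]⟩
      · obtain ⟨A, hA, hxA⟩ := (hun (dm i x)).1 (dm_mem hi.1 hi.2 hxi hx)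
        refine ⟨ub i A, Finset.mem_insert_of_mem (Finset.mem_image_of_mem _ hA), ?_⟩
        exact mem_ub.2 ⟨dm i x, hxA, um_dm hxi⟩
    · rintro ⟨A, hA, hxA⟩
      rcases Finset.mem_insert.1 hA with rfl | hA
      · rw [Finset.mem_singleton] at hxA
        subst hxA
        exact Finset.mem_Icc.2 hi
      · obtain ⟨B, hB, rfl⟩ := Finset.mem_image.1 hA
        obtain ⟨a, ha, rfl⟩ := mem_ub.1 hxA
        exact um_mem hi.1 hi.2 ((hun a).2 ⟨B, hB, ha⟩)

lemma U_noncross {i : ℕ} {π : Finset (Finset ℕ)} (hnc : ¬ Crossing π) :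
    ¬ Crossing (U i π) := by
  rintro ⟨A, hA, B, hB, hAB, a, ha, b, hb, c, hc, d, hd, h1, h2, h3⟩
  have hAne : A ≠ ({i} : Finset ℕ) := by
    rintro rfl
    rw [Finset.mem_singleton] at ha hb
    omega
  have hBne : B ≠ ({i} : Finset ℕ) := by
    rintro rfl
    rw [Finset.mem_singleton] at hc hd
    omega
  obtain ⟨A', hA', rfl⟩ := Finset.mem_image.1 ((Finset.mem_insert.1 hA).resolve_left hAne)
  obtain ⟨B', hB', rfl⟩ := Finset.mem_image.1 ((Finset.mem_insert.1 hB).resolve_left hBne)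
  obtain ⟨a', ha', rfl⟩ := mem_ub.1 ha
  obtain ⟨b', hb', rfl⟩ := mem_ub.1 hb
  obtain ⟨c', hc', rfl⟩ := mem_ub.1 hc
  obtain ⟨d', hd', rfl⟩ := mem_ub.1 hd
  exact hnc ⟨A', hA', B', hB', fun e => hAB (e ▸ rfl), a', ha', b', hb', c', hc', d', hd',
    (um_strictMono i).lt_iff_lt.1 h1, (um_strictMono i).lt_iff_lt.1 h2,
    (um_strictMono i).lt_iff_lt.1 h3⟩

end NC13
namespace NC13

lemma i_notMem_block {n i : ℕ} {σ : Finset (Finset ℕ)} (hσ : IsPartitionOf n σ)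
    (hiσ : ({i} : Finset ℕ) ∈ σ) {A : Finset ℕ} (hA : A ∈ σ.erase {i}) : i ∉ A := by
  obtain ⟨hAne, hAσ⟩ := Finset.mem_erase.1 hA
  intro hiA
  exact Finset.disjoint_left.1 (hσ.2.1 A hAσ _ hiσ hAne) hiA (Finset.mem_singleton_self i)

lemma db_injOn {i : ℕ} {σ : Finset (Finset ℕ)} (hσ : ∀ A ∈ σ, i ∉ A) :
    Set.InjOn (db i) σ := by
  intro A hA B hB hE
  rw [← ub_db (hσ A hA), ← ub_db (hσ B hB), hE]

lemma D_card {n i : ℕ} {σ : Finset (Finset ℕ)} (hσ : IsPartitionOf n σ)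
    (hiσ : ({i} : Finset ℕ) ∈ σ) : (D i σ).card = σ.card - 1 := by
  unfold D
  rw [Finset.card_image_of_injOn (db_injOn (fun A hA => i_notMem_block hσ hiσ hA)),
    Finset.card_erase_of_mem hiσ]

lemma D_partition {n i : ℕ} (hi : i ∈ Finset.Icc 1 n) {σ : Finset (Finset ℕ)}
    (hσ : IsPartitionOf n σ) (hiσ : ({i} : Finset ℕ) ∈ σ) :
    IsPartitionOf (n - 1) (D i σ) := by
  obtain ⟨hne, hdisj, hun⟩ := hσ
  rw [Finset.mem_Icc] at hi
  refine ⟨?_, ?_, ?_⟩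
  · intro A hA
    obtain ⟨B, hB, rfl⟩ := Finset.mem_image.1 hA
    obtain ⟨b, hb⟩ := hne B (Finset.mem_of_mem_erase hB)
    exact ⟨dm i b, mem_db.2 ⟨b, hb, rfl⟩⟩
  · intro A hA B hB hAB
    obtain ⟨A', hA', rfl⟩ := Finset.mem_image.1 hA
    obtain ⟨B', hB', rfl⟩ := Finset.mem_image.1 hB
    rw [Finset.disjoint_left]
    rintro x hxA hxB
    obtain ⟨a, ha, rfl⟩ := mem_db.1 hxA
    obtain ⟨b, hb, hba⟩ := mem_db.1 hxB
    have hia : a ≠ i := fun e => i_notMem_block ⟨hne, hdisj, hun⟩ hiσ hA' (e ▸ ha)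
    have hib : b ≠ i := fun e => i_notMem_block ⟨hne, hdisj, hun⟩ hiσ hB' (e ▸ hb)
    have : b = a := by rw [← um_dm hib, hba, um_dm hia]
    subst this
    have hne' : A' ≠ B' := fun e => hAB (e ▸ rfl)
    exact Finset.disjoint_left.1
      (hdisj A' (Finset.mem_of_mem_erase hA') B' (Finset.mem_of_mem_erase hB') hne') ha hb
  · intro x
    constructor
    · intro hx
      obtain ⟨A, hA, hxA⟩ := (hun (um i x)).1 (um_mem hi.1 hi.2 hx)
      have hA' : A ∈ σ.erase {i} := by
        refine Finset.mem_erase.2 ⟨?_, hA⟩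
        rintro rfl
        exact um_ne i x (Finset.mem_singleton.1 hxA)
      exact ⟨db i A, Finset.mem_image_of_mem _ hA', mem_db.2 ⟨um i x, hxA, dm_um i x⟩⟩
    · rintro ⟨A, hA, hxA⟩
      obtain ⟨B, hB, rfl⟩ := Finset.mem_image.1 hA
      obtain ⟨a, ha, rfl⟩ := mem_db.1 hxA
      have hia : a ≠ i := fun e => i_notMem_block ⟨hne, hdisj, hun⟩ hiσ hB (e ▸ ha)
      exact dm_mem hi.1 hi.2 hia ((hun a).2 ⟨B, Finset.mem_of_mem_erase hB, ha⟩)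

lemma D_noncross {n i : ℕ} {σ : Finset (Finset ℕ)} (hσ : IsPartitionOf n σ)
    (hiσ : ({i} : Finset ℕ) ∈ σ) (hnc : ¬ Crossing σ) : ¬ Crossing (D i σ) := by
  rintro ⟨A, hA, B, hB, hAB, a, ha, b, hb, c, hc, d, hd, h1, h2, h3⟩
  obtain ⟨A', hA', rfl⟩ := Finset.mem_image.1 hA
  obtain ⟨B', hB', rfl⟩ := Finset.mem_image.1 hB
  obtain ⟨a', ha', rfl⟩ := mem_db.1 ha
  obtain ⟨b', hb', rfl⟩ := mem_db.1 hb
  obtain ⟨c', hc', rfl⟩ := mem_db.1 hc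
  obtain ⟨d', hd', rfl⟩ := mem_db.1 hd
  have hiA := i_notMem_block hσ hiσ hA'
  have hiB := i_notMem_block hσ hiσ hB'
  have lt : ∀ {x y : ℕ}, x ≠ i → y ≠ i → dm i x < dm i y → x < y := by
    intro x y hx hy hxy
    rcases lt_trichotomy x y with h | rfl | h
    · exact h
    · omega
    · exact absurd (dm_lt hy hx h) (by omega)
  have hAB' : A' ≠ B' := fun e => hAB (e ▸ rfl)
  exact hnc ⟨A', Finset.mem_of_mem_erase hA', B', Finset.mem_of_mem_erase hB', hAB',
    a', ha', b', hb', c', hc', d', hd',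
    lt (fun e => hiA (e ▸ ha')) (fun e => hiB (e ▸ hc')) h1,
    lt (fun e => hiB (e ▸ hc')) (fun e => hiA (e ▸ hb')) h2,
    lt (fun e => hiA (e ▸ hb')) (fun e => hiB (e ▸ hd')) h3⟩

lemma D_filter {n i : ℕ} {σ : Finset (Finset ℕ)} (hσ : IsPartitionOf n σ)
    (hiσ : ({i} : Finset ℕ) ∈ σ)
    (hs : (σ.filter fun A => A.card = 1) = {({i} : Finset ℕ)}) :
    ((D i σ).filter fun A => A.card = 1).card = 0 := by
  rw [Finset.card_eq_zero, Finset.filter_eq_empty_iff]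
  intro B hB
  obtain ⟨A, hA, rfl⟩ := Finset.mem_image.1 hB
  rw [card_db (i_notMem_block hσ hiσ hA)]
  intro hc
  have : A ∈ σ.filter fun A => A.card = 1 :=
    Finset.mem_filter.2 ⟨Finset.mem_of_mem_erase hA, hc⟩
  rw [hs, Finset.mem_singleton] at this
  exact (Finset.mem_erase.1 hA).1 this

lemma U_D {i : ℕ} {σ : Finset (Finset ℕ)} {n : ℕ} (hσ : IsPartitionOf n σ)
    (hiσ : ({i} : Finset ℕ) ∈ σ) : U i (D i σ) = σ := by
  unfold U D
  rw [Finset.image_image]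
  have : (σ.erase {i}).image (ub i ∘ db i) = σ.erase {i} := by
    refine (Finset.image_congr ?_).trans Finset.image_id
    intro A hA
    exact ub_db (i_notMem_block hσ hiσ hA)
  rw [this, Finset.insert_erase hiσ]

end NC13
namespace NC13

lemma ub_inj (i : ℕ) : Function.Injective (ub i) :=
  Function.LeftInverse.injective (db_ub i)

lemma extract_singleton {σ : Finset (Finset ℕ)}
    (hs : (σ.filter fun A => A.card = 1).card = 1) :
    ∃ i : ℕ, (σ.filter fun A => A.card = 1) = {({i} : Finset ℕ)} ∧ ({i} : Finset ℕ) ∈ σ := by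
  obtain ⟨B, hB⟩ := Finset.card_eq_one.1 hs
  have hBm : B ∈ σ.filter fun A => A.card = 1 := hB ▸ Finset.mem_singleton_self B
  obtain ⟨hBσ, hBc⟩ := Finset.mem_filter.1 hBm
  obtain ⟨i, rfl⟩ := Finset.card_eq_one.1 hBc
  exact ⟨i, hB, hBσ⟩

end NC13

theorem stmt13 (n m : ℕ) (hn : 1 ≤ n) (hm : 1 ≤ m) (h : (n, m) ≠ (1, 1)) :
    Nonempty
      ({π : Finset (Finset ℕ) // IsNCPartition n π ∧ π.card = m ∧
          (π.filter fun A => A.card = 1).card = 1} ≃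
        {π : Finset (Finset ℕ) // IsNCPartition (n - 1) π ∧ π.card = m - 1 ∧
          (π.filter fun A => A.card = 1).card = 0} × (Finset.Icc 1 n : Finset ℕ)) ∧
    NCcount n m 1 = n * NCcount (n - 1) (m - 1) 0 := by
  classical
  set LHS := {π : Finset (Finset ℕ) // IsNCPartition n π ∧ π.card = m ∧
      (π.filter fun A => A.card = 1).card = 1} with hLHS
  set RHS := {π : Finset (Finset ℕ) // IsNCPartition (n - 1) π ∧ π.card = m - 1 ∧
      (π.filter fun A => A.card = 1).card = 0} with hRHS
  have Gmem : ∀ (p : RHS × (Finset.Icc 1 n : Finset ℕ)),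
      IsNCPartition n (NC13.U p.2.1 p.1.1) ∧ (NC13.U p.2.1 p.1.1).card = m ∧
      ((NC13.U p.2.1 p.1.1).filter fun A => A.card = 1).card = 1 := by
    rintro ⟨⟨π, ⟨hπp, hπnc⟩, hπm, hπs⟩, ⟨i, hi⟩⟩
    refine ⟨⟨NC13.U_partition hn hi hπp, NC13.U_noncross hπnc⟩, ?_, ?_⟩
    · rw [NC13.U_card hπp.1, hπm]; omega
    · rw [NC13.U_filter hπp.1 hπs, Finset.card_singleton]
  let G : RHS × (Finset.Icc 1 n : Finset ℕ) → LHS := fun p => ⟨NC13.U p.2.1 p.1.1, Gmem p⟩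
  have hGinj : Function.Injective G := by
    rintro ⟨⟨π, ⟨hπp, _⟩, _, hπs⟩, ⟨i, hi⟩⟩ ⟨⟨π', ⟨hπp', _⟩, _, hπs'⟩, ⟨j, hj⟩⟩ hE
    have hE' : NC13.U i π = NC13.U j π' := congrArg Subtype.val hE
    have hij : i = j := by
      have h1 : ((NC13.U i π).filter fun A => A.card = 1) = {({i} : Finset ℕ)} :=
        NC13.U_filter hπp.1 hπs
      have h2 : ((NC13.U j π').filter fun A => A.card = 1) = {({j} : Finset ℕ)} :=
        NC13.U_filter hπp'.1 hπs'
      have := h1.symm.trans (hE' ▸ h2)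
      have := Finset.singleton_injective this
      exact Finset.singleton_injective this
    subst hij
    have hπ : π = π' := by
      have h1 : (NC13.U i π).erase {i} = π.image (NC13.ub i) := by
        unfold NC13.U
        exact Finset.erase_insert (NC13.singleton_notMem_image i hπp.1)
      have h2 : (NC13.U i π').erase {i} = π'.image (NC13.ub i) := by
        unfold NC13.U
        exact Finset.erase_insert (NC13.singleton_notMem_image i hπp'.1)
      have : π.image (NC13.ub i) = π'.image (NC13.ub i) := by rw [← h1, ← h2, hE']
      exact Finset.image_injective (NC13.ub_inj i) this
    subst hπ
    rfl
  have hGsurj : Function.Surjective G := by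
    rintro ⟨σ, ⟨hσp, hσnc⟩, hσm, hσs⟩
    obtain ⟨i, hfilt, hiσ⟩ := NC13.extract_singleton hσs
    have hi : i ∈ Finset.Icc 1 n := (hσp.2.2 i).2 ⟨{i}, hiσ, Finset.mem_singleton_self i⟩
    refine ⟨⟨⟨NC13.D i σ, ⟨NC13.D_partition hi hσp hiσ, NC13.D_noncross hσp hiσ hσnc⟩,
      ?_, NC13.D_filter hσp hiσ hfilt⟩, ⟨i, hi⟩⟩, ?_⟩
    · rw [NC13.D_card hσp hiσ, hσm]
    · exact Subtype.ext (NC13.U_D hσp hiσ)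
  have e : RHS × (Finset.Icc 1 n : Finset ℕ) ≃ LHS := Equiv.ofBijective G ⟨hGinj, hGsurj⟩
  refine ⟨⟨e.symm⟩, ?_⟩
  have h1 : NCcount n m 1 = Nat.card LHS := rfl
  have h2 : NCcount (n - 1) (m - 1) 0 = Nat.card RHS := rfl
  rw [h1, h2, ← Nat.card_congr e, Nat.card_prod]
  have h3 : Nat.card (Finset.Icc 1 n : Finset ℕ) = n := by
    rw [Nat.card_eq_finsetCard, Nat.card_Icc]; omega
  rw [h3, Nat.mul_comm]
end
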